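/- arXiv:1401.3181 — 6 statements merged into one kernel-verified Lean document; each statement's English description precedes it below -/
import Mathlib

section
/- Let S_1,…,S_r be subsets of {1,…,n} and let k_1,…,k_r be positive integers with k_1+⋯+k_r > N_U = (d_1−1)+⋯+(d_n−1). Set D = d_1⋯d_n. Then for Lebesgue-almost every tuple (B_1,…,B_r), where B_i is a k_i × D complex matrix (identifying the space of k_i × D complex matrices with ℝ^{2 k_i D} equipped with Lebesgue measure), the system (*) with D_i = ker B_i has no nonzero solution. -/
noncomputable section

open scoped BigOperators
open MeasureTheory

/-- The product vector `ψ₁ ⊗ ⋯ ⊗ ψₙ` in `H = ℂ^{d₁} ⊗ ⋯ ⊗ ℂ^{dₙ}`, realized as the space of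
complex-valued functions on `(Fin d₁) × ⋯ × (Fin dₙ)`. -/
def prodVec {n : ℕ} (d : Fin n → ℕ) (ψ : (j : Fin n) → Fin (d j) → ℂ) :
    ((j : Fin n) → Fin (d j)) → ℂ :=
  fun x => ∏ j, ψ j (x j)

/-- The partial conjugate `ψ^{Γ(S)}` of the product vector `ψ₁ ⊗ ⋯ ⊗ ψₙ`. -/
def partialConj {n : ℕ} (d : Fin n → ℕ) (S : Finset (Fin n))
    (ψ : (j : Fin n) → Fin (d j) → ℂ) : ((j : Fin n) → Fin (d j)) → ℂ :=
  prodVec d fun j => if j ∈ S then fun i => starRingEnd ℂ (ψ j i) else ψ j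

open Module in
/-- The range of a differentiable map from a finite-dimensional real vector space into one of
strictly larger dimension is a null set for any additive Haar measure. -/
theorem aux_range_null {E F : Type*} [NormedAddCommGroup E] [NormedSpace ℝ E]
    [FiniteDimensional ℝ E] [NormedAddCommGroup F] [NormedSpace ℝ F] [FiniteDimensional ℝ F]
    [MeasurableSpace F] [BorelSpace F] (μ : Measure F) [μ.IsAddHaarMeasure]
    {G : E → F} (hG : Differentiable ℝ G) (h : finrank ℝ E < finrank ℝ F) :
    μ (Set.range G) = 0 := by
  let eE := (Module.finBasis ℝ E).equivFun
  let eF := (Module.finBasis ℝ F).equivFun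
  let pL : F →ₗ[ℝ] E :=
    eE.symm.toLinearMap ∘ₗ (LinearMap.funLeft ℝ ℝ (Fin.castLE h.le)) ∘ₗ eF.toLinearMap
  have hp : Function.Surjective pL :=
    eE.symm.surjective.comp
      ((LinearMap.funLeft_surjective_of_injective ℝ ℝ _ (Fin.castLE_injective h.le)).comp
        eF.surjective)
  let pC : F →L[ℝ] E := pL.toContinuousLinearMap
  have key : μ ((G ∘ pC) '' Set.univ) = 0 := by
    apply addHaar_image_eq_zero_of_det_fderivWithin_eq_zero μ
      (f' := fun x => ((fderiv ℝ G (pC x)).comp pC))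
    · intro x _
      exact (((hG (pC x)).hasFDerivAt).comp x pC.hasFDerivAt).hasFDerivWithinAt
    · intro x _
      set A : F →L[ℝ] F := (fderiv ℝ G (pC x)).comp pC with hA
      by_contra hdet
      have hu : IsUnit (LinearMap.toMatrix (Module.finBasis ℝ F) (Module.finBasis ℝ F)
          (A : F →ₗ[ℝ] F)).det := by
        rw [LinearMap.det_toMatrix]; exact isUnit_iff_ne_zero.2 hdet
      have hrange : LinearMap.range (A : F →ₗ[ℝ] F) = ⊤ := by
        rw [LinearMap.range_eq_top]
        have hs := (LinearEquiv.ofIsUnitDet hu).surjective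
        rwa [show ⇑(LinearEquiv.ofIsUnitDet hu) = ⇑(A : F →ₗ[ℝ] F) from
          congrArg (fun (g : F →ₗ[ℝ] F) => ⇑g) (LinearEquiv.coe_ofIsUnitDet hu)] at hs
      have h1 : (A : F →ₗ[ℝ] F) = ((fderiv ℝ G (pC x)) : E →ₗ[ℝ] F).comp pL := rfl
      have h2 : LinearMap.range (A : F →ₗ[ℝ] F) ≤
          LinearMap.range ((fderiv ℝ G (pC x)) : E →ₗ[ℝ] F) := by
        rw [h1]; exact LinearMap.range_comp_le_range _ _
      have h3 : finrank ℝ (LinearMap.range ((fderiv ℝ G (pC x)) : E →ₗ[ℝ] F)) ≤ finrank ℝ E :=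
        LinearMap.finrank_range_le _
      have h4 := Submodule.finrank_mono h2
      rw [hrange, finrank_top] at h4
      omega
  have hre : Set.range G = (G ∘ pC) '' Set.univ := by
    rw [Set.image_univ, Set.range_comp]
    rw [show Set.range ⇑pC = Set.range ⇑pL from rfl, hp.range_eq, Set.image_univ]
  rw [hre]; exact key

/-- The chart vector: entries off the marked coordinates come from the parameter `t`, the marked
coordinates are set to `1`. -/
def pcPsi {n : ℕ} (d : Fin n → ℕ) (c : (j : Fin n) → Fin (d j))
    (t : (j : Fin n) → {i : Fin (d j) // i ≠ c j} → ℂ) : (j : Fin n) → Fin (d j) → ℂ :=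
  fun j i => if h : i = c j then 1 else t j ⟨i, h⟩

/-- The chart parametrization of the "bad" tuples of matrices: entries of the matrices away from
the marked column are free parameters, and the marked column is solved for using the kernel
equations. -/
def pcG {n r : ℕ} (d : Fin n → ℕ) (S : Fin r → Finset (Fin n)) (k : Fin r → ℕ)
    (c : (j : Fin n) → Fin (d j)) :
    (((j : Fin n) → {i : Fin (d j) // i ≠ c j} → ℂ) ×
      ((i : Fin r) → Fin (k i) → {x : (j : Fin n) → Fin (d j) // x ≠ c} → ℂ)) →
    ((i : Fin r) → Fin (k i) → ((j : Fin n) → Fin (d j)) → ℂ) :=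
  fun p i row x =>
    if hx : x = c then
      -(∑ y : {x : (j : Fin n) → Fin (d j) // x ≠ c},
          p.2 i row y * partialConj d (S i) (pcPsi d c p.1) y)
    else p.2 i row ⟨x, hx⟩

theorem aux_diff_prod {ι E : Type*} [NormedAddCommGroup E] [NormedSpace ℝ E]
    (u : Finset ι) {f : ι → E → ℂ} (h : ∀ i, Differentiable ℝ (f i)) :
    Differentiable ℝ (fun x => ∏ i ∈ u, f i x) := by
  classical
  induction u using Finset.induction with
  | empty => simp only [Finset.prod_empty]; exact differentiable_const (1 : ℂ)
  | @insert a u hi ih => simpa [Finset.prod_insert hi] using (h a).fun_mul ih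

theorem pcG_differentiable {n r : ℕ} (d : Fin n → ℕ) (S : Fin r → Finset (Fin n))
    (k : Fin r → ℕ) (c : (j : Fin n) → Fin (d j)) :
    Differentiable ℝ (pcG d S k c) := by
  rw [differentiable_pi]; intro i
  rw [differentiable_pi]; intro row
  rw [differentiable_pi]; intro x
  by_cases hx : x = c
  · simp only [pcG, dif_pos hx]
    apply Differentiable.neg
    apply Differentiable.fun_sum
    intro y _
    apply Differentiable.mul
    · fun_prop
    · simp only [partialConj, prodVec]
      apply aux_diff_prod
      intro j
      by_cases hj : j ∈ S i
      · simp only [if_pos hj, starRingEnd_apply]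
        by_cases h : (y : (j : Fin n) → Fin (d j)) j = c j
        · simp only [pcPsi, dif_pos h]; fun_prop
        · simp only [pcPsi, dif_neg h]; fun_prop
      · simp only [if_neg hj]
        by_cases h : (y : (j : Fin n) → Fin (d j)) j = c j
        · simp only [pcPsi, dif_pos h]; fun_prop
        · simp only [pcPsi, dif_neg h]; fun_prop
  · simp only [pcG, dif_neg hx]
    fun_prop

open Module in
theorem aux_finrank_fun (κ : Type) [Fintype κ] (V : Type) [NormedAddCommGroup V]
    [NormedSpace ℝ V] [FiniteDimensional ℝ V] :
    finrank ℝ (κ → V) = Fintype.card κ * finrank ℝ V := by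
  rw [Module.finrank_pi_fintype, Finset.sum_const, Finset.card_univ, smul_eq_mul]

open Module in
theorem pcG_dim {n r : ℕ} (d : Fin n → ℕ) (hd : ∀ j, 0 < d j) (k : Fin r → ℕ)
    (c : (j : Fin n) → Fin (d j)) (hNE : ∑ j, (d j - 1) < ∑ i, k i) :
    finrank ℝ ((((j : Fin n) → {i : Fin (d j) // i ≠ c j} → ℂ) ×
      ((i : Fin r) → Fin (k i) → {x : (j : Fin n) → Fin (d j) // x ≠ c} → ℂ))) <
    finrank ℝ ((i : Fin r) → Fin (k i) → ((j : Fin n) → Fin (d j)) → ℂ) := by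
  have hcard1 : ∀ j, Fintype.card {i : Fin (d j) // i ≠ c j} = d j - 1 := by
    intro j
    have h := Fintype.card_subtype_compl (α := Fin (d j)) (fun i => i = c j)
    rw [Fintype.card_subtype_eq, Fintype.card_fin] at h
    exact h
  have hne : Nonempty ((j : Fin n) → Fin (d j)) := ⟨fun j => ⟨0, hd j⟩⟩
  set Dc := Fintype.card ((j : Fin n) → Fin (d j)) with hDc
  have hDc1 : 1 ≤ Dc := Fintype.card_pos
  have hcard2 : Fintype.card {x : (j : Fin n) → Fin (d j) // x ≠ c} = Dc - 1 := by
    have h := Fintype.card_subtype_compl (α := (j : Fin n) → Fin (d j)) (fun x => x = c)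
    rw [Fintype.card_subtype_eq] at h
    exact h
  rw [Module.finrank_prod, Module.finrank_pi_fintype, Module.finrank_pi_fintype,
    Module.finrank_pi_fintype]
  have hT : ∀ j : Fin n, finrank ℝ ({i : Fin (d j) // i ≠ c j} → ℂ) = (d j - 1) * 2 := by
    intro j; rw [aux_finrank_fun, hcard1 j, Complex.finrank_real_complex]
  have hB : ∀ i : Fin r, finrank ℝ (Fin (k i) → {x : (j : Fin n) → Fin (d j) // x ≠ c} → ℂ)
      = k i * ((Dc - 1) * 2) := by
    intro i
    rw [aux_finrank_fun, aux_finrank_fun, hcard2, Complex.finrank_real_complex, Fintype.card_fin]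
  have hC : ∀ i : Fin r, finrank ℝ (Fin (k i) → ((j : Fin n) → Fin (d j)) → ℂ)
      = k i * (Dc * 2) := by
    intro i
    rw [aux_finrank_fun, aux_finrank_fun, Complex.finrank_real_complex, Fintype.card_fin, ← hDc]
  simp only [hT, hB, hC]
  rw [← Finset.sum_mul, ← Finset.sum_mul, ← Finset.sum_mul]
  have hsplit : (∑ i, k i) * (Dc * 2) = (∑ i, k i) * ((Dc - 1) * 2) + (∑ i, k i) * 2 := by
    have : Dc * 2 = (Dc - 1) * 2 + 2 := by omega
    rw [this, Nat.mul_add]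
  rw [hsplit]
  have h2 : (∑ j, (d j - 1)) * 2 < (∑ i, k i) * 2 := by omega
  omega

theorem mem_range_pcG {n r : ℕ} (d : Fin n → ℕ) (S : Fin r → Finset (Fin n)) (k : Fin r → ℕ)
    (B : (i : Fin r) → Fin (k i) → ((j : Fin n) → Fin (d j)) → ℂ)
    (ψ : (j : Fin n) → Fin (d j) → ℂ) (h0 : ∀ j, ψ j ≠ 0)
    (hker : ∀ i, partialConj d (S i) ψ ∈ LinearMap.ker (Matrix.mulVecLin (Matrix.of (B i)))) :
    ∃ c, B ∈ Set.range (pcG d S k c) := by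
  have hch : ∀ j, ∃ i, ψ j i ≠ 0 := fun j => Function.ne_iff.1 (h0 j)
  choose c hc using hch
  refine ⟨c, ?_⟩
  set φ : (j : Fin n) → Fin (d j) → ℂ := fun j i => (ψ j (c j))⁻¹ * ψ j i with hφ
  have hφc : ∀ j, φ j (c j) = 1 := fun j => inv_mul_cancel₀ (hc j)
  have hscale : ∀ S' : Finset (Fin n), partialConj d S' φ =
      (∏ j, (if j ∈ S' then (starRingEnd ℂ) (ψ j (c j))⁻¹ else (ψ j (c j))⁻¹)) •
        partialConj d S' ψ := by
    intro S'; funext x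
    simp only [partialConj, prodVec, Pi.smul_apply, smul_eq_mul]
    rw [← Finset.prod_mul_distrib]
    apply Finset.prod_congr rfl
    intro j _
    by_cases hj : j ∈ S'
    · simp only [if_pos hj, hφ, map_mul]
    · simp only [if_neg hj, hφ]
  have hkerφ : ∀ i, Matrix.mulVecLin (Matrix.of (B i)) (partialConj d (S i) φ) = 0 := by
    intro i
    rw [hscale, _root_.map_smul, LinearMap.mem_ker.1 (hker i), smul_zero]
  have hone : ∀ S' : Finset (Fin n), partialConj d S' φ c = 1 := by
    intro S'
    simp only [partialConj, prodVec]
    apply Finset.prod_eq_one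
    intro j _
    by_cases hj : j ∈ S' <;> simp [hj, hφc j]
  have hrow : ∀ i (row : Fin (k i)), ∑ y, B i row y * partialConj d (S i) φ y = 0 := by
    intro i row
    have h := congrFun (hkerφ i) row
    simpa [Matrix.mulVecLin_apply, Matrix.mulVec, dotProduct] using h
  set t : (j : Fin n) → {i : Fin (d j) // i ≠ c j} → ℂ := fun j i' => φ j i'.1 with ht
  set b : (i : Fin r) → Fin (k i) → {x : (j : Fin n) → Fin (d j) // x ≠ c} → ℂ :=
    fun i row y => B i row y.1 with hb
  have hψt : pcPsi d c t = φ := by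
    funext j i
    by_cases h : i = c j
    · subst h; simp [pcPsi, hφc j]
    · simp [pcPsi, h, ht]
  refine ⟨(t, b), ?_⟩
  funext i row x
  by_cases hx : x = c
  · simp only [pcG, dif_pos hx, hψt, hb]
    subst hx
    have hsplit : ∑ y, B i row y * partialConj d (S i) φ y
        = B i row x * partialConj d (S i) φ x
          + ∑ y : {z : (j : Fin n) → Fin (d j) // z ≠ x},
              B i row y.1 * partialConj d (S i) φ y.1 := by
      rw [← Finset.add_sum_erase Finset.univ _ (Finset.mem_univ x)]
      congr 1
      exact Finset.sum_subtype (p := fun z => z ≠ x) (Finset.univ.erase x)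
        (fun z => by simp [Finset.mem_erase]) _
    rw [hrow i row, hone (S i), mul_one] at hsplit
    linear_combination hsplit
  · simp only [pcG, dif_neg hx, hb]

open Module in
/-- Over-determined case: if `N_E = ∑ kᵢ > N_U = ∑ (dⱼ - 1)`, then for (Lebesgue-)almost every
tuple of matrices `(B₁, …, B_r)`, `Bᵢ` of size `kᵢ × (d₁⋯dₙ)`, the system of equations
`ψ^{Γ(Sᵢ)} ∈ ker Bᵢ` has no nonzero product-vector solution. -/
theorem overdetermined_generic_no_solution {n r : ℕ} (d : Fin n → ℕ) (hd : ∀ j, 0 < d j)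
    (S : Fin r → Finset (Fin n)) (k : Fin r → ℕ)
    (hNE : ∑ j, (d j - 1) < ∑ i, k i) :
    ∀ᵐ B : (i : Fin r) → Fin (k i) → ((j : Fin n) → Fin (d j)) → ℂ ∂volume,
      ¬ ∃ ψ : (j : Fin n) → Fin (d j) → ℂ, (∀ j, ψ j ≠ 0) ∧
        ∀ i, partialConj d (S i) ψ ∈ LinearMap.ker (Matrix.mulVecLin (Matrix.of (B i))) := by
  rw [ae_iff]
  simp only [not_not]
  apply measure_mono_null
    (t := ⋃ c : (j : Fin n) → Fin (d j), Set.range (pcG d S k c))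
  · rintro B ⟨ψ, h0, hker⟩
    obtain ⟨c, hc⟩ := mem_range_pcG d S k B ψ h0 hker
    exact Set.mem_iUnion.2 ⟨c, hc⟩
  · apply measure_iUnion_null
    intro c
    haveI inst1 : ∀ i : Fin r,
        (volume : Measure (Fin (k i) → ((j : Fin n) → Fin (d j)) → ℂ)).IsAddHaarMeasure :=
      fun i => MeasureTheory.Measure.pi.isAddHaarMeasure _
    haveI inst2 : (volume :
        Measure ((i : Fin r) → Fin (k i) → ((j : Fin n) → Fin (d j)) → ℂ)).IsAddHaarMeasure :=
      MeasureTheory.Measure.pi.isAddHaarMeasure _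
    exact aux_range_null volume (pcG_differentiable d S k c) (pcG_dim d hd k c hNE)
end
end

section
/- Let β_1, β_2 ∈ ℂ² ⊗ ℂ² be given by β_1 = e_0⊗e_0 + e_1⊗e_1 and β_2 = e_0⊗e_1 − e_1⊗e_0, where e_0, e_1 is the standard basis of ℂ². Then there exist no nonzero vectors ψ_1, ψ_2, ψ_3, ψ_4 ∈ ℂ² satisfying all four orthogonality conditions in ℂ²⊗ℂ²⊗ℂ²⊗ℂ² (with respect to the standard Hermitian inner product): ψ_1 ⊗ conj(ψ_2) ⊗ ψ_3 ⊗ conj(ψ_4) ⊥ β_1⊗β_1, ψ_1 ⊗ conj(ψ_2) ⊗ ψ_3 ⊗ ψ_4 ⊥ β_1⊗β_2, ψ_1 ⊗ ψ_2 ⊗ ψ_3 ⊗ conj(ψ_4) ⊥ β_2⊗β_1, and ψ_1 ⊗ ψ_2 ⊗ ψ_3 ⊗ ψ_4 ⊥ β_2⊗β_2. (Here conj denotes the entrywise complex conjugate, β_a⊗β_b ∈ (ℂ²)^{⊗4} is taken with the first factor β_a occupying tensor positions 1,2 and the second factor β_b positions 3,4, and (ℂ²)^{⊗4} is realized as the space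 of complex-valued functions on (Fin 2)^4 with (v_1⊗v_2⊗v_3⊗v_4)(i_1,i_2,i_3,i_4) = v_1(i_1)v_2(i_2)v_3(i_3)v_4(i_4).) -/
noncomputable section

open scoped BigOperators

/-- The standard basis vector `e₀` of `ℂ²`. -/
def e0 : Fin 2 → ℂ := fun i => if i = 0 then 1 else 0

/-- The standard basis vector `e₁` of `ℂ²`. -/
def e1 : Fin 2 → ℂ := fun i => if i = 1 then 1 else 0

/-- `β₁ = e₀ ⊗ e₀ + e₁ ⊗ e₁ ∈ ℂ² ⊗ ℂ²`, as a function on `Fin 2 × Fin 2`. -/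
def beta1 : Fin 2 × Fin 2 → ℂ := fun p => e0 p.1 * e0 p.2 + e1 p.1 * e1 p.2

/-- `β₂ = e₀ ⊗ e₁ - e₁ ⊗ e₀ ∈ ℂ² ⊗ ℂ²`, as a function on `Fin 2 × Fin 2`. -/
def beta2 : Fin 2 × Fin 2 → ℂ := fun p => e0 p.1 * e1 p.2 - e1 p.1 * e0 p.2

/-- The entrywise complex conjugate of a vector in `ℂ²`. -/
def conj2 (v : Fin 2 → ℂ) : Fin 2 → ℂ := fun i => starRingEnd ℂ (v i)

/-- The tensor product `v₁ ⊗ v₂ ⊗ v₃ ⊗ v₄ ∈ (ℂ²)^{⊗4}`, realized as a function on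
`(Fin 2)⁴`. -/
def tprod4 (v1 v2 v3 v4 : Fin 2 → ℂ) : EuclideanSpace ℂ (Fin 2 × Fin 2 × Fin 2 × Fin 2) :=
  WithLp.toLp 2 (fun x => v1 x.1 * v2 x.2.1 * v3 x.2.2.1 * v4 x.2.2.2)

/-- `β_a ⊗ β_b ∈ (ℂ²)^{⊗4}`, with `β_a` occupying tensor positions 1,2 and `β_b`
positions 3,4. -/
def bb (a b : Fin 2 × Fin 2 → ℂ) : EuclideanSpace ℂ (Fin 2 × Fin 2 × Fin 2 × Fin 2) :=
  WithLp.toLp 2 (fun x => a (x.1, x.2.1) * b (x.2.2.1, x.2.2.2))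

set_option maxHeartbeats 1000000 in
lemma inner_bb (v1 v2 v3 v4 : Fin 2 → ℂ) (a b : Fin 2 × Fin 2 → ℂ) :
    (inner ℂ (tprod4 v1 v2 v3 v4) (bb a b) : ℂ) =
      (∑ i, ∑ j, starRingEnd ℂ (v1 i * v2 j) * a (i, j)) *
      (∑ k, ∑ l, starRingEnd ℂ (v3 k * v4 l) * b (k, l)) := by
  simp only [PiLp.inner_apply, tprod4, bb, PiLp.toLp_apply, RCLike.inner_apply,
    Fintype.sum_prod_type, Fin.sum_univ_two, map_mul]
  ring

lemma sum_beta1 (u v : Fin 2 → ℂ) :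
    (∑ i, ∑ j, starRingEnd ℂ (u i * v j) * beta1 (i, j)) =
      starRingEnd ℂ (u 0 * v 0) + starRingEnd ℂ (u 1 * v 1) := by
  simp [beta1, e0, e1, Fin.sum_univ_two]

lemma sum_beta2 (u v : Fin 2 → ℂ) :
    (∑ i, ∑ j, starRingEnd ℂ (u i * v j) * beta2 (i, j)) =
      starRingEnd ℂ (u 0 * v 1) - starRingEnd ℂ (u 1 * v 0) := by
  simp [beta2, e0, e1, Fin.sum_univ_two]
  ring

lemma key (u v : Fin 2 → ℂ) (hu : u ≠ 0) (hv : v ≠ 0)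
    (h1 : starRingEnd ℂ (u 0) * v 0 + starRingEnd ℂ (u 1) * v 1 = 0)
    (h2 : u 0 * v 1 - u 1 * v 0 = 0) : False := by
  have emc : ∀ z : ℂ, starRingEnd ℂ z * z = (Complex.normSq z : ℂ) := fun z => by
    rw [mul_comm, Complex.mul_conj]
  have hn : starRingEnd ℂ (u 0) * u 0 + starRingEnd ℂ (u 1) * u 1 ≠ 0 := by
    rw [emc, emc]
    intro h
    apply hu
    have h' : (Complex.normSq (u 0) : ℂ) + (Complex.normSq (u 1) : ℂ) = 0 := by
      simpa using h
    rw [← Complex.ofReal_add] at h'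
    have := Complex.ofReal_eq_zero.mp h'
    have h0 : Complex.normSq (u 0) = 0 ∧ Complex.normSq (u 1) = 0 := by
      constructor <;> nlinarith [Complex.normSq_nonneg (u 0), Complex.normSq_nonneg (u 1)]
    funext i
    fin_cases i
    · exact Complex.normSq_eq_zero.mp h0.1
    · exact Complex.normSq_eq_zero.mp h0.2
  have hv0 : (starRingEnd ℂ (u 0) * u 0 + starRingEnd ℂ (u 1) * u 1) * v 0 = 0 := by
    linear_combination u 0 * h1 - starRingEnd ℂ (u 1) * h2
  have hv1 : (starRingEnd ℂ (u 0) * u 0 + starRingEnd ℂ (u 1) * u 1) * v 1 = 0 := by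
    linear_combination u 1 * h1 + starRingEnd ℂ (u 0) * h2
  apply hv
  funext i
  fin_cases i
  · exact (mul_eq_zero.mp hv0).resolve_left hn
  · exact (mul_eq_zero.mp hv1).resolve_left hn

/-- Four qubit example with the same number of equations and unknowns but no nonzero
solution: there exist no nonzero `ψ₁, ψ₂, ψ₃, ψ₄ ∈ ℂ²` with
`ψ₁ ⊗ ψ̄₂ ⊗ ψ₃ ⊗ ψ̄₄ ⊥ β₁⊗β₁`, `ψ₁ ⊗ ψ̄₂ ⊗ ψ₃ ⊗ ψ₄ ⊥ β₁⊗β₂`,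
`ψ₁ ⊗ ψ₂ ⊗ ψ₃ ⊗ ψ̄₄ ⊥ β₂⊗β₁` and `ψ₁ ⊗ ψ₂ ⊗ ψ₃ ⊗ ψ₄ ⊥ β₂⊗β₂`. -/
theorem four_qubit_no_solution :
    ¬ ∃ ψ1 ψ2 ψ3 ψ4 : Fin 2 → ℂ, ψ1 ≠ 0 ∧ ψ2 ≠ 0 ∧ ψ3 ≠ 0 ∧ ψ4 ≠ 0 ∧
      (inner ℂ (tprod4 ψ1 (conj2 ψ2) ψ3 (conj2 ψ4)) (bb beta1 beta1) : ℂ) = 0 ∧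
      (inner ℂ (tprod4 ψ1 (conj2 ψ2) ψ3 ψ4) (bb beta1 beta2) : ℂ) = 0 ∧
      (inner ℂ (tprod4 ψ1 ψ2 ψ3 (conj2 ψ4)) (bb beta2 beta1) : ℂ) = 0 ∧
      (inner ℂ (tprod4 ψ1 ψ2 ψ3 ψ4) (bb beta2 beta2) : ℂ) = 0 := by
  rintro ⟨a, b, c, d, ha, hb, hc, hd, hE1, hE2, hE3, hE4⟩
  set A : ℂ := starRingEnd ℂ (a 0) * b 0 + starRingEnd ℂ (a 1) * b 1 with hA
  set B : ℂ := starRingEnd ℂ (a 0) * starRingEnd ℂ (b 1)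
    - starRingEnd ℂ (a 1) * starRingEnd ℂ (b 0) with hB
  set C : ℂ := starRingEnd ℂ (c 0) * d 0 + starRingEnd ℂ (c 1) * d 1 with hC
  set D : ℂ := starRingEnd ℂ (c 0) * starRingEnd ℂ (d 1)
    - starRingEnd ℂ (c 1) * starRingEnd ℂ (d 0) with hD
  have h1 : A * C = 0 := by
    rw [← hE1, inner_bb, sum_beta1, sum_beta1]
    simp only [hA, hC, conj2, map_mul, Complex.conj_conj]
  have h2 : A * D = 0 := by
    rw [← hE2, inner_bb, sum_beta1, sum_beta2]
    simp only [hA, hD, conj2, map_mul, Complex.conj_conj]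
  have h3 : B * C = 0 := by
    rw [← hE3, inner_bb, sum_beta2, sum_beta1]
    simp only [hB, hC, conj2, map_mul, Complex.conj_conj]
  have h4 : B * D = 0 := by
    rw [← hE4, inner_bb, sum_beta2, sum_beta2]
    simp only [hB, hD, conj2, map_mul, Complex.conj_conj]
  have keyD : D = 0 → C = 0 → False := by
    intro hD0 hC0
    refine key c d hc hd hC0 ?_
    have : starRingEnd ℂ (c 0 * d 1 - c 1 * d 0) = 0 := by
      rw [map_sub, map_mul, map_mul]; exact hD0
    simpa using (starRingEnd ℂ).injective (by simpa using this)
  rcases mul_eq_zero.mp h1 with hA0 | hC0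
  · rcases mul_eq_zero.mp h3 with hB0 | hC0
    · refine key a b ha hb hA0 ?_
      have : starRingEnd ℂ (a 0 * b 1 - a 1 * b 0) = 0 := by
        rw [map_sub, map_mul, map_mul]; exact hB0
      simpa using (starRingEnd ℂ).injective (by simpa using this)
    · rcases mul_eq_zero.mp h4 with hB0 | hD0
      · refine key a b ha hb hA0 ?_
        have : starRingEnd ℂ (a 0 * b 1 - a 1 * b 0) = 0 := by
          rw [map_sub, map_mul, map_mul]; exact hB0
        simpa using (starRingEnd ℂ).injective (by simpa using this)
      · exact keyD hD0 hC0
  · rcases mul_eq_zero.mp h2 with hA0 | hD0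
    · rcases mul_eq_zero.mp h4 with hB0 | hD0
      · refine key a b ha hb hA0 ?_
        have : starRingEnd ℂ (a 0 * b 1 - a 1 * b 0) = 0 := by
          rw [map_sub, map_mul, map_mul]; exact hB0
        simpa using (starRingEnd ℂ).injective (by simpa using this)
      · exact keyD hD0 hC0
    · exact keyD hD0 hC0
end
end

section
/- Let n = 2m+1 ≥ 3 be an odd integer and let Σ be an n×n matrix with all entries equal to +1 or −1. If μ(Σ) ≥ mn − (m−1), then there exists a matrix Σ′ equivalent to Σ with μ(Σ′) < μ(Σ). -/
noncomputable section

open scoped BigOperators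

/-- `μ(M)`: the number of entries of `M` equal to `-1`. -/
def mu {n : ℕ} (M : Matrix (Fin n) (Fin n) ℤ) : ℕ :=
  (Finset.univ.filter fun p : Fin n × Fin n => M p.1 p.2 = -1).card

/-- Two `n × n` matrices with entries `±1` are equivalent if one is obtained from the other
by permuting rows and columns and negating rows and columns: `B i j = ε i * δ j * A (π i) (τ j)`
for permutations `π, τ` and signs `ε, δ`. -/
def MatEquiv {n : ℕ} (A B : Matrix (Fin n) (Fin n) ℤ) : Prop :=
  ∃ (π τ : Equiv.Perm (Fin n)) (ε δ : Fin n → ℤ),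
    (∀ i, ε i = 1 ∨ ε i = -1) ∧ (∀ j, δ j = 1 ∨ δ j = -1) ∧
      ∀ i j, B i j = ε i * δ j * A (π i) (τ j)

/-! ### Auxiliary definitions and lemmas -/

/-- Negate row `i0`. -/
def negR {n : ℕ} (i0 : Fin n) (M : Matrix (Fin n) (Fin n) ℤ) : Matrix (Fin n) (Fin n) ℤ :=
  fun i j => (if i = i0 then (-1 : ℤ) else 1) * M i j

/-- Negate column `j0`. -/
def negC {n : ℕ} (j0 : Fin n) (M : Matrix (Fin n) (Fin n) ℤ) : Matrix (Fin n) (Fin n) ℤ :=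
  fun i j => (if j = j0 then (-1 : ℤ) else 1) * M i j

/-- Number of `-1` entries in row `i`. -/
def rowCt {n : ℕ} (M : Matrix (Fin n) (Fin n) ℤ) (i : Fin n) : ℕ :=
  ∑ j, if M i j = -1 then 1 else 0

/-- Number of `-1` entries in column `j`. -/
def colCt {n : ℕ} (M : Matrix (Fin n) (Fin n) ℤ) (j : Fin n) : ℕ :=
  ∑ i, if M i j = -1 then 1 else 0

lemma mu_eq_sum {n : ℕ} (M : Matrix (Fin n) (Fin n) ℤ) :
    mu M = ∑ i, ∑ j, if M i j = -1 then 1 else 0 := by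
  rw [mu, Finset.card_filter, Fintype.sum_prod_type]

lemma sum_ite_flip {n : ℕ} (f g : Fin n → ℤ) (i0 : Fin n) (h : ∀ i, i ≠ i0 → g i = f i) :
    ((∑ i, if g i = -1 then 1 else 0) + (if f i0 = -1 then 1 else 0) : ℕ)
      = (∑ i, if f i = -1 then 1 else 0) + (if g i0 = -1 then 1 else 0) := by
  rw [Finset.sum_eq_sum_sdiff_singleton_add (Finset.mem_univ i0)
        (fun i => if g i = -1 then (1:ℕ) else 0),
      Finset.sum_eq_sum_sdiff_singleton_add (Finset.mem_univ i0)
        (fun i => if f i = -1 then (1:ℕ) else 0)]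
  have hs : ∑ i ∈ Finset.univ \ {i0}, (if g i = -1 then (1:ℕ) else 0)
      = ∑ i ∈ Finset.univ \ {i0}, (if f i = -1 then (1:ℕ) else 0) := by
    refine Finset.sum_congr rfl fun i hi => ?_
    rw [h i (by simpa using (Finset.mem_sdiff.mp hi).2)]
  omega

lemma sign_flip {x : ℤ} (hx : x = 1 ∨ x = -1) :
    ((if (-1 : ℤ) * x = -1 then 1 else 0) + (if x = -1 then 1 else 0) : ℕ) = 1 := by
  rcases hx with h | h <;> simp [h]

lemma mu_negC {n : ℕ} (M : Matrix (Fin n) (Fin n) ℤ) (hM : ∀ i j, M i j = 1 ∨ M i j = -1)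
    (j0 : Fin n) : mu (negC j0 M) + 2 * colCt M j0 = mu M + n := by
  have key : ∀ i : Fin n,
      (∑ j, if negC j0 M i j = -1 then 1 else 0) + 2 * (if M i j0 = -1 then 1 else 0)
        = (∑ j, if M i j = -1 then 1 else 0) + 1 := by
    intro i
    have h1 := sum_ite_flip (fun j => M i j) (fun j => negC j0 M i j) j0
      (fun j hj => by simp [negC, hj])
    have h2 : negC j0 M i j0 = -1 * M i j0 := by simp [negC]
    have h3 := sign_flip (hM i j0)
    simp only [h2] at h1
    omega
  have := Finset.sum_congr rfl (fun i (_ : i ∈ Finset.univ) => key i)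
  rw [Finset.sum_add_distrib, Finset.sum_add_distrib, ← Finset.mul_sum] at this
  simp only [Finset.sum_const, Finset.card_univ, Fintype.card_fin, smul_eq_mul, mul_one] at this
  rw [mu_eq_sum, mu_eq_sum]
  have hcol : colCt M j0 = ∑ i, if M i j0 = -1 then 1 else 0 := rfl
  omega

lemma mu_negR {n : ℕ} (M : Matrix (Fin n) (Fin n) ℤ) (hM : ∀ i j, M i j = 1 ∨ M i j = -1)
    (i0 : Fin n) : mu (negR i0 M) + 2 * rowCt M i0 = mu M + n := by
  have key : ∀ j : Fin n,
      (∑ i, if negR i0 M i j = -1 then 1 else 0) + 2 * (if M i0 j = -1 then 1 else 0)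
        = (∑ i, if M i j = -1 then 1 else 0) + 1 := by
    intro j
    have h1 := sum_ite_flip (fun i => M i j) (fun i => negR i0 M i j) i0
      (fun i hi => by simp [negR, hi])
    have h2 : negR i0 M i0 j = -1 * M i0 j := by simp [negR]
    have h3 := sign_flip (hM i0 j)
    simp only [h2] at h1
    omega
  have := Finset.sum_congr rfl (fun j (_ : j ∈ Finset.univ) => key j)
  rw [Finset.sum_add_distrib, Finset.sum_add_distrib, ← Finset.mul_sum] at this
  simp only [Finset.sum_const, Finset.card_univ, Fintype.card_fin, smul_eq_mul, mul_one] at this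
  have e1 : mu (negR i0 M) = ∑ j, ∑ i, if negR i0 M i j = -1 then 1 else 0 := by
    rw [mu_eq_sum]; exact Finset.sum_comm
  have e2 : mu M = ∑ j, ∑ i, if M i j = -1 then 1 else 0 := by
    rw [mu_eq_sum]; exact Finset.sum_comm
  have hrow : rowCt M i0 = ∑ j, if M i0 j = -1 then 1 else 0 := rfl
  rw [e1, e2]
  omega

lemma negR_entries {n : ℕ} (M : Matrix (Fin n) (Fin n) ℤ) (hM : ∀ i j, M i j = 1 ∨ M i j = -1)
    (i0 : Fin n) : ∀ i j, negR i0 M i j = 1 ∨ negR i0 M i j = -1 := by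
  intro i j
  unfold negR
  rcases hM i j with h | h <;> rw [h] <;> split <;> norm_num

lemma negC_entries {n : ℕ} (M : Matrix (Fin n) (Fin n) ℤ) (hM : ∀ i j, M i j = 1 ∨ M i j = -1)
    (j0 : Fin n) : ∀ i j, negC j0 M i j = 1 ∨ negC j0 M i j = -1 := by
  intro i j
  unfold negC
  rcases hM i j with h | h <;> rw [h] <;> split <;> norm_num

lemma card_small_le {n m : ℕ} (g : Fin n → ℕ) (hg : ∀ x, g x ≤ m)
    (h : m * n - (m - 1) ≤ ∑ x, g x) :
    (Finset.univ.filter fun x => g x < m).card ≤ m - 1 := by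
  have key : (∑ x, g x) + (Finset.univ.filter fun x => g x < m).card ≤ m * n := by
    rw [Finset.card_filter, ← Finset.sum_add_distrib]
    calc ∑ x, (g x + if g x < m then 1 else 0) ≤ ∑ _x : Fin n, m := by
          refine Finset.sum_le_sum fun x _ => ?_
          have := hg x; split <;> omega
      _ = m * n := by simp [Finset.sum_const, mul_comm]
  obtain ⟨K, hK⟩ : ∃ K, m * n = K := ⟨_, rfl⟩
  rw [hK] at key h
  omega

/-- Odd case of sign reduction: if `n = 2m + 1 ≥ 3` and `M` is an `n × n` `(±1)`-matrix with
`μ(M) ≥ mn - (m - 1)`, then `M` is equivalent to a matrix `M'` with `μ(M') < μ(M)`. -/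
theorem mu_reduction_odd {m n : ℕ} (hn : n = 2 * m + 1) (hn3 : 3 ≤ n)
    (M : Matrix (Fin n) (Fin n) ℤ) (hM : ∀ i j, M i j = 1 ∨ M i j = -1)
    (hmu : m * n - (m - 1) ≤ mu M) :
    ∃ M' : Matrix (Fin n) (Fin n) ℤ, MatEquiv M M' ∧ mu M' < mu M := by
  classical
  have hm : 1 ≤ m := by omega
  by_cases hc : ∃ j, m + 1 ≤ colCt M j
  · obtain ⟨j0, hj0⟩ := hc
    refine ⟨negC j0 M, ⟨1, 1, fun _ => 1, fun j => if j = j0 then -1 else 1,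
      fun _ => Or.inl rfl, fun j => by dsimp only; split <;> norm_num, fun i j => by
        simp [negC, Equiv.Perm.one_apply]⟩, ?_⟩
    have := mu_negC M hM j0
    omega
  by_cases hr : ∃ i, m + 1 ≤ rowCt M i
  · obtain ⟨i0, hi0⟩ := hr
    refine ⟨negR i0 M, ⟨1, 1, fun i => if i = i0 then -1 else 1, fun _ => 1,
      fun i => by dsimp only; split <;> norm_num, fun _ => Or.inl rfl, fun i j => by
        simp [negR, Equiv.Perm.one_apply]⟩, ?_⟩
    have := mu_negR M hM i0
    omega
  push_neg at hc hr
  -- every row and column has at most m entries equal to -1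
  have hmuS : mu M = ∑ i, rowCt M i := mu_eq_sum M
  have hmuT : mu M = ∑ j, colCt M j := by rw [mu_eq_sum]; exact Finset.sum_comm
  have hS : (Finset.univ.filter fun i => rowCt M i < m).card ≤ m - 1 :=
    card_small_le (rowCt M) (fun i => by have := hr i; omega) (by rw [← hmuS]; exact hmu)
  have hT : (Finset.univ.filter fun j => colCt M j < m).card ≤ m - 1 :=
    card_small_le (colCt M) (fun j => by have := hc j; omega) (by rw [← hmuT]; exact hmu)
  -- find a row with exactly m entries equal to -1
  have hScompl : (Finset.univ.filter fun i => ¬ rowCt M i < m).Nonempty := by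
    rw [← Finset.card_pos]
    have h1 := Finset.card_filter_add_card_filter_not
      (s := (Finset.univ : Finset (Fin n))) (p := fun i => rowCt M i < m)
    simp only [Finset.card_univ, Fintype.card_fin] at h1
    omega
  obtain ⟨i0, hi0⟩ := hScompl
  have hri0 : rowCt M i0 = m := by
    have h1 := (Finset.mem_filter.mp hi0).2
    have h2 := hr i0
    omega
  -- columns where row i0 has a +1 entry
  have hP : (Finset.univ.filter fun j => M i0 j = 1).card = m + 1 := by
    have h1 := Finset.card_filter_add_card_filter_not
      (s := (Finset.univ : Finset (Fin n))) (p := fun j => M i0 j = -1)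
    have h2 : (Finset.univ.filter fun j => ¬ M i0 j = -1)
        = (Finset.univ.filter fun j => M i0 j = 1) := by
      refine Finset.filter_congr fun j _ => ?_
      rcases hM i0 j with h | h <;> simp [h]
    have h3 : (Finset.univ.filter fun j => M i0 j = -1).card = m := by
      rw [Finset.card_filter]; exact hri0
    rw [h2, h3] at h1
    simp only [Finset.card_univ, Fintype.card_fin] at h1
    omega
  -- two good columns
  have h2le : 1 < ((Finset.univ.filter fun j => M i0 j = 1)
      \ (Finset.univ.filter fun j => colCt M j < m)).card := by
    have := Finset.le_card_sdiff (Finset.univ.filter fun j => colCt M j < m)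
      (Finset.univ.filter fun j => M i0 j = 1)
    omega
  obtain ⟨j1, hj1, j2, hj2, hne⟩ := Finset.one_lt_card.mp h2le
  rw [Finset.mem_sdiff, Finset.mem_filter, Finset.mem_filter] at hj1 hj2
  have hj1P : M i0 j1 = 1 := hj1.1.2
  have hj2P : M i0 j2 = 1 := hj2.1.2
  have hcj1 : colCt M j1 = m := by
    have h1 := hc j1
    have h2 : ¬ colCt M j1 < m := fun h => hj1.2 ⟨Finset.mem_univ _, h⟩
    omega
  have hcj2 : colCt M j2 = m := by
    have h1 := hc j2
    have h2 : ¬ colCt M j2 < m := fun h => hj2.2 ⟨Finset.mem_univ _, h⟩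
    omega
  -- the three-step modification
  set M1 := negR i0 M with hM1def
  set M2 := negC j1 M1 with hM2def
  set M3 := negC j2 M2 with hM3def
  have hM1 : ∀ i j, M1 i j = 1 ∨ M1 i j = -1 := negR_entries M hM i0
  have hM2 : ∀ i j, M2 i j = 1 ∨ M2 i j = -1 := negC_entries M1 hM1 j1
  have e1 : mu M1 + 2 * rowCt M i0 = mu M + n := mu_negR M hM i0
  have e2 : mu M2 + 2 * colCt M1 j1 = mu M1 + n := mu_negC M1 hM1 j1
  have e3 : mu M3 + 2 * colCt M2 j2 = mu M2 + n := mu_negC M2 hM2 j2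
  have hM1i0 : ∀ j, M1 i0 j = -1 * M i0 j := fun j => by simp [hM1def, negR]
  have hc1 : colCt M1 j1 = m + 1 := by
    have h1 := sum_ite_flip (fun i => M i j1) (fun i => M1 i j1) i0
      (fun i hi => by simp [hM1def, negR, hi])
    have ha : (if M i0 j1 = -1 then (1:ℕ) else 0) = 0 := by rw [hj1P]; norm_num
    have hb : (if M1 i0 j1 = -1 then (1:ℕ) else 0) = 1 := by
      rw [hM1i0 j1, hj1P]; norm_num
    rw [ha, hb] at h1
    have hc' : colCt M1 j1 = ∑ i, if M1 i j1 = -1 then 1 else 0 := rfl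
    have hc'' : colCt M j1 = ∑ i, if M i j1 = -1 then 1 else 0 := rfl
    omega
  have hc1' : colCt M1 j2 = m + 1 := by
    have h1 := sum_ite_flip (fun i => M i j2) (fun i => M1 i j2) i0
      (fun i hi => by simp [hM1def, negR, hi])
    have ha : (if M i0 j2 = -1 then (1:ℕ) else 0) = 0 := by rw [hj2P]; norm_num
    have hb : (if M1 i0 j2 = -1 then (1:ℕ) else 0) = 1 := by
      rw [hM1i0 j2, hj2P]; norm_num
    rw [ha, hb] at h1
    have hc' : colCt M1 j2 = ∑ i, if M1 i j2 = -1 then 1 else 0 := rfl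
    have hc'' : colCt M j2 = ∑ i, if M i j2 = -1 then 1 else 0 := rfl
    omega
  have hc2 : colCt M2 j2 = m + 1 := by
    have heq : colCt M2 j2 = colCt M1 j2 := by
      refine Finset.sum_congr rfl fun i _ => ?_
      have : M2 i j2 = M1 i j2 := by simp [hM2def, negC, hne.symm]
      rw [this]
    omega
  refine ⟨M3, ⟨1, 1, (fun i => if i = i0 then -1 else 1),
    (fun j => (if j = j2 then -1 else 1) * (if j = j1 then -1 else 1)), ?_, ?_, ?_⟩, ?_⟩
  · intro i; dsimp only; split <;> norm_num
  · intro j; dsimp only; split <;> split <;> norm_num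
  · intro i j
    simp only [hM3def, hM2def, hM1def, negC, negR, Equiv.Perm.one_apply]
    ring
  · omega
end
end

section
/- Let n = 2m ≥ 4 be an even integer and let Σ be an n×n matrix with all entries equal to +1 or −1. If μ(Σ) ≥ mn − m, then there exists a matrix Σ′ equivalent to Σ with μ(Σ′) < μ(Σ). -/
noncomputable section

open scoped BigOperators

/- Auxiliary lemmas. -/

lemma sum_entries_eq {n : ℕ} (A : Matrix (Fin n) (Fin n) ℤ)
    (hA : ∀ i j, A i j = 1 ∨ A i j = -1) :
    ∑ i, ∑ j, A i j = (n : ℤ)^2 - 2 * mu A := by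
  classical
  have h1 : (mu A : ℤ) = ∑ i, ∑ j, (if A i j = -1 then (1:ℤ) else 0) := by
    rw [mu, Finset.card_filter]
    push_cast
    rw [Fintype.sum_prod_type]
  have h2 : ∀ i j, A i j = 1 - 2 * (if A i j = -1 then (1:ℤ) else 0) := by
    intro i j; rcases hA i j with h | h <;> simp [h]
  calc ∑ i, ∑ j, A i j
      = ∑ i, ∑ j, (1 - 2 * (if A i j = -1 then (1:ℤ) else 0)) :=
        Finset.sum_congr rfl fun i _ => Finset.sum_congr rfl fun j _ => h2 i j
    _ = (n:ℤ)^2 - 2 * ∑ i, ∑ j, (if A i j = -1 then (1:ℤ) else 0) := by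
        simp only [Finset.sum_sub_distrib, Finset.sum_const, Finset.card_univ,
          Fintype.card_fin, nsmul_eq_mul, ← Finset.mul_sum, mul_one]
        ring
    _ = _ := by rw [h1]

lemma sum_sign_filter {α : Type*} [Fintype α] (p : α → Prop) [DecidablePred p] (f : α → ℤ) :
    ∑ x, (if p x then (-1:ℤ) else 1) * f x
      = ∑ x, f x - 2 * ∑ x ∈ Finset.univ.filter p, f x := by
  have h : ∀ x, (if p x then (-1:ℤ) else 1) * f x = f x - (if p x then 2 * f x else 0) := by
    intro x; split <;> ring
  simp_rw [h]
  rw [Finset.sum_sub_distrib]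
  congr 1
  rw [Finset.mul_sum, ← Finset.sum_filter]

lemma sum_flip_one {α : Type*} [Fintype α] [DecidableEq α] (f : α → ℤ) (a : α) :
    ∑ x, (if x = a then (-1:ℤ) else 1) * f x = ∑ x, f x - 2 * f a := by
  rw [sum_sign_filter]
  simp [Finset.filter_eq']

lemma double_sum_eps {n : ℕ} (M : Matrix (Fin n) (Fin n) ℤ) (ε δ : Fin n → ℤ) :
    ∑ i, ∑ j, ε i * δ j * M i j = ∑ i, ε i * ∑ j, δ j * M i j := by
  simp_rw [mul_assoc, ← Finset.mul_sum]

lemma reduce {n : ℕ} (M : Matrix (Fin n) (Fin n) ℤ) (hM : ∀ i j, M i j = 1 ∨ M i j = -1)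
    (ε δ : Fin n → ℤ) (hε : ∀ i, ε i = 1 ∨ ε i = -1) (hδ : ∀ j, δ j = 1 ∨ δ j = -1)
    (hS : ∑ i, ∑ j, M i j < ∑ i, ∑ j, ε i * δ j * M i j) :
    ∃ M' : Matrix (Fin n) (Fin n) ℤ, MatEquiv M M' ∧ mu M' < mu M := by
  classical
  set B : Matrix (Fin n) (Fin n) ℤ := fun i j => ε i * δ j * M i j with hB
  have hBent : ∀ i j, B i j = 1 ∨ B i j = -1 := by
    intro i j
    rcases hε i with h1 | h1 <;> rcases hδ j with h2 | h2 <;> rcases hM i j with h3 | h3 <;>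
      simp [hB, h1, h2, h3]
  refine ⟨B, ⟨1, 1, ε, δ, hε, hδ, fun i j => by simp [hB]⟩, ?_⟩
  have e1 := sum_entries_eq M hM
  have e2 := sum_entries_eq B hBent
  have hlt : (mu B : ℤ) < (mu M : ℤ) := by
    have h : ∑ i, ∑ j, M i j < ∑ i, ∑ j, B i j := hS
    linarith
  exact_mod_cast hlt

lemma card_zero_ge {k : ℕ} {f : Fin k → ℤ} (h0 : ∀ i, 0 ≤ f i) (hdvd : ∀ i, (2:ℤ) ∣ f i)
    {m : ℕ} (hk : k = 2*m) (hs : ∑ i, f i ≤ 2*(m:ℤ)) :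
    m ≤ (Finset.univ.filter (fun i => f i = 0)).card := by
  classical
  set P := Finset.univ.filter (fun i => f i = 0) with hP
  set Q := Finset.univ.filter (fun i => ¬ f i = 0) with hQ
  have hsplit : ∑ i ∈ P, f i + ∑ i ∈ Q, f i = ∑ i, f i :=
    Finset.sum_filter_add_sum_filter_not _ _ _
  have hz : ∑ i ∈ P, f i = 0 := Finset.sum_eq_zero fun i hi => (Finset.mem_filter.1 hi).2
  have hge : (Q.card : ℤ) * 2 ≤ ∑ i ∈ Q, f i := by
    have h2 : ∀ i ∈ Q, (2:ℤ) ≤ f i := by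
      intro i hi
      have hne := (Finset.mem_filter.1 hi).2
      have ha := h0 i; have hb := hdvd i
      omega
    calc (Q.card : ℤ) * 2 = Q.card • (2:ℤ) := by rw [nsmul_eq_mul]
      _ ≤ ∑ i ∈ Q, f i := Finset.card_nsmul_le_sum Q f 2 h2
  have hcards : P.card + Q.card = k := by
    simpa using Finset.card_filter_add_card_filter_not
      (s := (Finset.univ : Finset (Fin k))) (p := fun i => f i = 0)
  have hQle : (Q.card : ℤ) ≤ (m:ℤ) := by linarith
  have hQle' : Q.card ≤ m := by exact_mod_cast hQle
  omega

lemma eq_one_of_sum {α : Type*} {s : Finset α} {f : α → ℤ} (h1 : ∀ x ∈ s, f x ≤ 1)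
    (hs : (s.card : ℤ) ≤ ∑ x ∈ s, f x) : ∀ x ∈ s, f x = 1 := by
  intro x hx
  by_contra hne
  have hlt : ∑ y ∈ s, f y < ∑ y ∈ s, (1:ℤ) :=
    Finset.sum_lt_sum h1 ⟨x, hx, lt_of_le_of_ne (h1 x hx) hne⟩
  rw [Finset.sum_const, nsmul_eq_mul, mul_one] at hlt
  linarith

/-- Even case of sign reduction: if `n = 2m ≥ 4` and `M` is an `n × n` `(±1)`-matrix with
`μ(M) ≥ mn - m`, then `M` is equivalent to a matrix `M'` with `μ(M') < μ(M)`. -/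
theorem mu_reduction_even {m n : ℕ} (hn : n = 2 * m) (hn4 : 4 ≤ n)
    (M : Matrix (Fin n) (Fin n) ℤ) (hM : ∀ i j, M i j = 1 ∨ M i j = -1)
    (hmu : m * n - m ≤ mu M) :
    ∃ M' : Matrix (Fin n) (Fin n) ℤ, MatEquiv M M' ∧ mu M' < mu M := by
  classical
  subst hn
  by_cases h1 : ∃ i, ∑ j, M i j < 0
  · obtain ⟨i₀, hi₀⟩ := h1
    apply reduce M hM (fun i => if i = i₀ then -1 else 1) (fun _ => 1)
      (fun i => by by_cases h : i = i₀ <;> simp [h]) (fun _ => Or.inl rfl)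
    rw [double_sum_eps]
    simp only [one_mul]
    rw [sum_flip_one (fun i => ∑ j, M i j) i₀]
    linarith
  by_cases h2 : ∃ j, ∑ i, M i j < 0
  · obtain ⟨j₀, hj₀⟩ := h2
    apply reduce M hM (fun _ => 1) (fun j => if j = j₀ then -1 else 1)
      (fun _ => Or.inl rfl) (fun j => by by_cases h : j = j₀ <;> simp [h])
    rw [double_sum_eps]
    simp only [one_mul]
    have hin : ∀ i, (∑ j, (if j = j₀ then (-1:ℤ) else 1) * M i j)
        = (∑ j, M i j) - 2 * M i j₀ := fun i => sum_flip_one (M i) j₀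
    simp_rw [hin]
    rw [Finset.sum_sub_distrib, ← Finset.mul_sum]
    have hγ : ∑ i, M i j₀ < 0 := hj₀
    linarith
  by_cases h3 : ∃ i j, (∑ j', M i j' = 0) ∧ (∑ i', M i' j = 0) ∧ M i j = 1
  · obtain ⟨i₀, j₀, hρ0, hγ0, hMij⟩ := h3
    apply reduce M hM (fun i => if i = i₀ then -1 else 1) (fun j => if j = j₀ then -1 else 1)
      (fun i => by by_cases h : i = i₀ <;> simp [h])
      (fun j => by by_cases h : j = j₀ <;> simp [h])
    rw [double_sum_eps]
    have hin : ∀ i, (∑ j, (if j = j₀ then (-1:ℤ) else 1) * M i j)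
        = (∑ j, M i j) - 2 * M i j₀ := fun i => sum_flip_one (M i) j₀
    simp_rw [hin]
    rw [sum_flip_one (fun i => (∑ j, M i j) - 2 * M i j₀) i₀]
    rw [Finset.sum_sub_distrib, ← Finset.mul_sum]
    have hγ : ∑ i, M i j₀ = 0 := hγ0
    rw [hρ0, hMij, hγ]
    linarith
  -- Case 4: every row and column sum is nonnegative, and every entry at the crossing of a
  -- zero-sum row with a zero-sum column equals -1.
  push_neg at h1 h2 h3
  have hm2 : 2 ≤ m := by omega
  have hblock : ∀ i j, (∑ j', M i j' = 0) → (∑ i', M i' j = 0) → M i j = -1 :=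
    fun i j hi hj => (hM i j).resolve_left (h3 i j hi hj)
  have hent1 : ∀ i j, M i j ≤ 1 := fun i j => by rcases hM i j with h | h <;> rw [h] <;> norm_num
  -- total sum bound
  have hmle : m ≤ m * (2*m) := Nat.le_mul_of_pos_right m (by omega)
  have hmu' : ((m:ℤ) * (2*(m:ℤ)) - m) ≤ (mu M : ℤ) := by
    zify [hmle] at hmu
    push_cast at hmu ⊢
    linarith
  have hse := sum_entries_eq M hM
  have hS2m : ∑ i, ∑ j, M i j ≤ 2*(m:ℤ) := by
    rw [hse]; push_cast; nlinarith [hmu']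
  have hS2m' : ∑ j, ∑ i, M i j ≤ 2*(m:ℤ) := by
    rw [Finset.sum_comm]; exact hS2m
  -- parity of row and column sums
  have hrow_dvd : ∀ i, (2:ℤ) ∣ ∑ j, M i j := by
    intro i
    have hd : (2:ℤ) ∣ ∑ j, (M i j - 1) := Finset.dvd_sum fun j _ => by
      rcases hM i j with h | h <;> rw [h] <;> decide
    have he : ∑ j, (M i j - 1) = (∑ j, M i j) - 2*(m:ℤ) := by
      rw [Finset.sum_sub_distrib, Finset.sum_const, Finset.card_univ, Fintype.card_fin]
      push_cast; ring
    rw [he] at hd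
    omega
  have hcol_dvd : ∀ j, (2:ℤ) ∣ ∑ i, M i j := by
    intro j
    have hd : (2:ℤ) ∣ ∑ i, (M i j - 1) := Finset.dvd_sum fun i _ => by
      rcases hM i j with h | h <;> rw [h] <;> decide
    have he : ∑ i, (M i j - 1) = (∑ i, M i j) - 2*(m:ℤ) := by
      rw [Finset.sum_sub_distrib, Finset.sum_const, Finset.card_univ, Fintype.card_fin]
      push_cast; ring
    rw [he] at hd
    omega
  -- the zero-sum rows/columns and their complements
  set R0 : Finset (Fin (2*m)) := Finset.univ.filter (fun i => ∑ j, M i j = 0) with hR0def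
  set NR : Finset (Fin (2*m)) := Finset.univ.filter (fun i => ¬ ∑ j, M i j = 0) with hNRdef
  set C0 : Finset (Fin (2*m)) := Finset.univ.filter (fun j => ∑ i, M i j = 0) with hC0def
  set NC : Finset (Fin (2*m)) := Finset.univ.filter (fun j => ¬ ∑ i, M i j = 0) with hNCdef
  have hR0ge : m ≤ R0.card := card_zero_ge h1 hrow_dvd rfl hS2m
  have hC0ge : m ≤ C0.card := card_zero_ge h2 hcol_dvd rfl hS2m'
  have hRcards : R0.card + NR.card = 2*m := by
    simpa using Finset.card_filter_add_card_filter_not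
      (s := (Finset.univ : Finset (Fin (2*m)))) (p := fun i => ∑ j, M i j = 0)
  have hCcards : C0.card + NC.card = 2*m := by
    simpa using Finset.card_filter_add_card_filter_not
      (s := (Finset.univ : Finset (Fin (2*m)))) (p := fun j => ∑ i, M i j = 0)
  -- splitting identities for zero rows and columns
  have key : ∀ i, (∑ j, M i j = 0) → ∑ j ∈ NC, M i j = (C0.card : ℤ) := by
    intro i hi
    have hsplit : ∑ j ∈ C0, M i j + ∑ j ∈ NC, M i j = ∑ j, M i j :=
      Finset.sum_filter_add_sum_filter_not _ _ _
    have hval : ∑ j ∈ C0, M i j = -(C0.card : ℤ) := by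
      rw [Finset.sum_congr rfl (fun j hj => hblock i j hi (Finset.mem_filter.1 hj).2)]
      simp; rfl
    rw [hi, hval] at hsplit
    linarith
  have key2 : ∀ j, (∑ i, M i j = 0) → ∑ i ∈ NR, M i j = (R0.card : ℤ) := by
    intro j hj
    have hsplit : ∑ i ∈ R0, M i j + ∑ i ∈ NR, M i j = ∑ i, M i j :=
      Finset.sum_filter_add_sum_filter_not _ _ _
    have hval : ∑ i ∈ R0, M i j = -(R0.card : ℤ) := by
      rw [Finset.sum_congr rfl (fun i hi => hblock i j (Finset.mem_filter.1 hi).2 hj)]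
      simp; rfl
    rw [hj, hval] at hsplit
    linarith
  -- C0.card = m
  have hR0ne : ∃ i, ∑ j, M i j = 0 := by
    have hpos : 0 < R0.card := lt_of_lt_of_le (by omega) hR0ge
    obtain ⟨i, hi⟩ := Finset.card_pos.1 hpos
    exact ⟨i, (Finset.mem_filter.1 hi).2⟩
  obtain ⟨istar, histar⟩ := hR0ne
  have hC0card : C0.card = m := by
    have hk := key istar histar
    have hb : ∑ j ∈ NC, M istar j ≤ (NC.card : ℤ) := by
      calc ∑ j ∈ NC, M istar j ≤ ∑ j ∈ NC, (1:ℤ) :=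
            Finset.sum_le_sum fun j _ => hent1 istar j
        _ = NC.card := by simp
    have hcc : (C0.card : ℤ) ≤ (NC.card : ℤ) := by linarith
    have hle : C0.card ≤ NC.card := by exact_mod_cast hcc
    omega
  have hNCcard : NC.card = m := by omega
  -- R0.card = m
  have hC0ne : ∃ j, ∑ i, M i j = 0 := by
    have hpos : 0 < C0.card := by omega
    obtain ⟨j, hj⟩ := Finset.card_pos.1 hpos
    exact ⟨j, (Finset.mem_filter.1 hj).2⟩
  obtain ⟨jstar, hjstar⟩ := hC0ne
  have hR0card : R0.card = m := by
    have hk := key2 jstar hjstar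
    have hb : ∑ i ∈ NR, M i jstar ≤ (NR.card : ℤ) := by
      calc ∑ i ∈ NR, M i jstar ≤ ∑ i ∈ NR, (1:ℤ) :=
            Finset.sum_le_sum fun i _ => hent1 i jstar
        _ = NR.card := by simp
    have hcc : (R0.card : ℤ) ≤ (NR.card : ℤ) := by linarith
    have hle : R0.card ≤ NR.card := by exact_mod_cast hcc
    omega
  have hNRcard : NR.card = m := by omega
  -- zero-sum rows are +1 outside C0
  have hii : ∀ i, (∑ j, M i j = 0) → ∀ j ∈ NC, M i j = 1 := by
    intro i hi
    refine eq_one_of_sum (fun j _ => hent1 i j) ?_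
    rw [key i hi, hC0card, hNCcard]
  -- find a -1 entry in the complementary block
  have hcol_split : ∀ j, ∑ i ∈ R0, M i j + ∑ i ∈ NR, M i j = ∑ i, M i j :=
    fun j => Finset.sum_filter_add_sum_filter_not _ _ _
  have hR0sum : ∀ j ∈ NC, ∑ i ∈ R0, M i j = (m:ℤ) := by
    intro j hj
    rw [Finset.sum_congr rfl (fun i hi => hii i (Finset.mem_filter.1 hi).2 j hj)]
    simp [hR0card]; exact hR0card
  have hT : ∑ j ∈ NC, (∑ i ∈ NR, M i j) < ∑ j ∈ NC, (m:ℤ) := by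
    have h0 : ∑ j ∈ C0, (∑ i, M i j) = 0 :=
      Finset.sum_eq_zero fun j hj => (Finset.mem_filter.1 hj).2
    have hsplitS : ∑ j ∈ C0, (∑ i, M i j) + ∑ j ∈ NC, (∑ i, M i j) = ∑ j, ∑ i, M i j :=
      Finset.sum_filter_add_sum_filter_not _ _ _
    have hXY : ∑ j ∈ NC, (∑ i, M i j) = ∑ j ∈ NC, ((m:ℤ) + ∑ i ∈ NR, M i j) :=
      Finset.sum_congr rfl fun j hj => by rw [← hcol_split j, hR0sum j hj]
    rw [Finset.sum_add_distrib] at hXY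
    have hNm : ∑ j ∈ NC, (m:ℤ) = (m:ℤ) * m := by
      rw [Finset.sum_const, hNCcard, nsmul_eq_mul]
    rw [hNm] at hXY ⊢
    nlinarith [hS2m', hsplitS, h0, hXY]
  obtain ⟨j₀, hj₀N, hj₀lt⟩ := Finset.exists_lt_of_sum_lt hT
  have hinner : ∑ i ∈ NR, M i j₀ < ∑ i ∈ NR, (1:ℤ) := by
    rw [Finset.sum_const, hNRcard, nsmul_eq_mul, mul_one]
    exact hj₀lt.trans_le (by norm_num)
  obtain ⟨i₀, hi₀NR, hi₀lt⟩ := Finset.exists_lt_of_sum_lt hinner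
  have hMentry : M i₀ j₀ = -1 :=
    (hM i₀ j₀).resolve_left (by intro h; rw [h] at hi₀lt; linarith)
  -- bound on the j₀-column sum
  have hbnd : ∑ i ∈ NR, M i j₀ ≤ (m:ℤ) - 2 := by
    rw [← Finset.add_sum_erase NR (fun i => M i j₀) hi₀NR]
    have herase : ∑ i ∈ NR.erase i₀, M i j₀ ≤ ((NR.erase i₀).card : ℤ) := by
      calc ∑ i ∈ NR.erase i₀, M i j₀ ≤ ∑ i ∈ NR.erase i₀, (1:ℤ) :=
            Finset.sum_le_sum fun i _ => hent1 i j₀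
        _ = (NR.erase i₀).card := by simp
    have hcard' : (NR.erase i₀).card = m - 1 := by
      rw [Finset.card_erase_of_mem hi₀NR, hNRcard]
    rw [hcard'] at herase
    have hc : ((m - 1 : ℕ) : ℤ) = (m:ℤ) - 1 := by
      have h1m : 1 ≤ m := by omega
      push_cast [h1m]; ring
    rw [hc] at herase
    rw [hMentry]
    linarith
  have hγj₀ : ∑ i, M i j₀ ≤ 2*(m:ℤ) - 2 := by
    rw [← hcol_split j₀, hR0sum j₀ hj₀N]
    linarith
  -- final switch: negate all zero-sum rows and column j₀
  apply reduce M hM (fun i => if (∑ j, M i j) = 0 then -1 else 1)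
    (fun j => if j = j₀ then -1 else 1)
    (fun i => by by_cases h : (∑ j, M i j) = 0 <;> simp [h])
    (fun j => by by_cases h : j = j₀ <;> simp [h])
  rw [double_sum_eps]
  have hin : ∀ i, (∑ j, (if j = j₀ then (-1:ℤ) else 1) * M i j)
      = (∑ j, M i j) - 2 * M i j₀ := fun i => sum_flip_one (M i) j₀
  simp_rw [hin]
  rw [sum_sign_filter (fun i => (∑ j, M i j) = 0) (fun i => (∑ j, M i j) - 2 * M i j₀)]
  rw [Finset.sum_sub_distrib, ← Finset.mul_sum]
  rw [Finset.sum_sub_distrib (s := Finset.univ.filter (fun i => (∑ j, M i j) = 0))]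
  have e1 : ∑ i ∈ R0, (∑ j, M i j) = 0 :=
    Finset.sum_eq_zero fun i hi => (Finset.mem_filter.1 hi).2
  have e2 : ∑ i ∈ R0, 2 * M i j₀ = 2 * (m:ℤ) := by
    rw [← Finset.mul_sum]
    rw [Finset.sum_congr rfl (fun i hi => hii i (Finset.mem_filter.1 hi).2 j₀ hj₀N)]
    simp [hR0card]; exact hR0card
  rw [show (Finset.univ.filter (fun i => (∑ j, M i j) = 0)) = R0 from rfl, e1, e2]
  linarith
end
end

section
/- Let n = 2^k for some integer k ≥ 2, and let Σ be an n×n matrix with all entries equal to +1 or −1. If per(Σ) = 0, then μ(Σ), the number of entries of Σ equal to −1, is even. -/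
noncomputable section

open scoped BigOperators

/-- The permanent of an `n × n` matrix. -/
def perm {n : ℕ} (M : Matrix (Fin n) (Fin n) ℤ) : ℤ :=
  ∑ l : Equiv.Perm (Fin n), ∏ i, M i (l i)

-- digit sum recursion
lemma s2_rec (m : ℕ) (hm : m ≠ 0) :
    (Nat.digits 2 m).sum = m % 2 + (Nat.digits 2 (m / 2)).sum := by
  rw [Nat.digits_def' (by norm_num : 1 < 2) (Nat.pos_of_ne_zero hm)]
  simp

lemma s2_le_self (m : ℕ) : (Nat.digits 2 m).sum ≤ m := by
  induction m using Nat.strong_induction_on with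
  | _ m ih =>
    rcases Nat.eq_zero_or_pos m with h | h
    · simp [h]
    · rw [s2_rec m h.ne']
      have h2 : m / 2 < m := Nat.div_lt_self h (by norm_num)
      have := ih (m / 2) h2
      omega

lemma s2_pow_sub_one (k : ℕ) : (Nat.digits 2 (2 ^ k - 1)).sum = k := by
  induction k with
  | zero => simp
  | succ k ih =>
    have hone' : 2 ≤ 2 ^ (k+1) := by
      have : (2:ℕ) ^ 1 ≤ 2 ^ (k+1) := Nat.pow_le_pow_right (by norm_num) (by omega)
      simpa using this
    have h1 : 2 ^ (k+1) - 1 ≠ 0 := by omega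
    rw [s2_rec _ h1]
    have h2 : 2 ^ (k+1) - 1 = 2 * (2 ^ k - 1) + 1 := by
      have : 1 ≤ 2 ^ k := Nat.one_le_two_pow
      ring_nf
      omega
    rw [h2]
    simp [Nat.mul_add_div, ih]
    omega

lemma s2_lt_of_lt (k m : ℕ) (hm : m < 2 ^ k) (hne : m ≠ 2 ^ k - 1) :
    (Nat.digits 2 m).sum < k := by
  induction k generalizing m with
  | zero => interval_cases m <;> simp_all
  | succ k ih =>
    rcases Nat.eq_zero_or_pos m with h | h
    · subst h
      simp only [Nat.digits_zero, List.sum_nil]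
      omega
    rw [s2_rec m h.ne']
    have hdiv : m / 2 < 2 ^ k := by omega
    by_cases hd : m / 2 = 2 ^ k - 1
    · -- then m = 2*(2^k-1) or 2*(2^k-1)+1 ; latter is 2^(k+1)-1 excluded
      have hm2 : m = 2 * (m / 2) + m % 2 := (Nat.div_add_mod m 2).symm ▸ by omega
      have hone : 1 ≤ 2 ^ k := Nat.one_le_two_pow
      have : m % 2 = 0 := by
        rcases Nat.mod_two_eq_zero_or_one m with h0 | h1
        · exact h0
        · exfalso; apply hne; omega
      rw [this, hd, s2_pow_sub_one]
      omega
    · have := ih (m / 2) hdiv hd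
      have : m % 2 ≤ 1 := by omega
      omega

lemma s2_pow (k : ℕ) : (Nat.digits 2 (2 ^ k)).sum = 1 := by
  induction k with
  | zero => simp
  | succ k ih =>
    have h2 : 2 ^ (k+1) = 2 * 2 ^ k := by ring
    have hpos : 0 < 2 ^ k := Nat.pos_of_ne_zero (by positivity)
    rw [s2_rec _ (by omega), h2, Nat.mul_mod_right, Nat.mul_div_cancel_left _ (by norm_num : 0 < 2)]
    simpa using ih

-- 2-adic valuation of factorial
lemma val_factorial (m : ℕ) : padicValNat 2 (Nat.factorial m) = m - (Nat.digits 2 m).sum := by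
  have := sub_one_mul_padicValNat_factorial (p := 2) m
  simpa using this

lemma fiber_card {n : ℕ} (S : Finset (Fin n)) (σ0 : Equiv.Perm (Fin n)) :
    (Finset.univ.filter fun σ : Equiv.Perm (Fin n) => ∀ i ∈ S, σ i = σ0 i).card
      = Nat.factorial (n - S.card) := by
  classical
  rw [← Fintype.card_subtype]
  have e1 : {σ : Equiv.Perm (Fin n) // ∀ i ∈ S, σ i = σ0 i}
      ≃ {f : Equiv.Perm (Fin n) // ∀ a, ¬(a ∉ S) → f a = a} :=
    { toFun := fun σ => ⟨σ0⁻¹ * σ.1, fun i hi => by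
        have := σ.2 i (not_not.mp hi)
        simp [Equiv.Perm.mul_apply, this]⟩
      invFun := fun π => ⟨σ0 * π.1, fun i hi => by
        have := π.2 i (not_not.mpr hi)
        simp [Equiv.Perm.mul_apply, this]⟩
      left_inv := fun σ => by ext x; simp
      right_inv := fun π => by ext x; simp }
  have e2 : {f : Equiv.Perm (Fin n) // ∀ a, ¬(a ∉ S) → f a = a}
      ≃ Equiv.Perm {x : Fin n // x ∉ S} :=
    (Equiv.Perm.subtypeEquivSubtypePerm (fun x => x ∉ S)).symm
  rw [Fintype.card_congr (e1.trans e2), Fintype.card_perm]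
  congr 1
  rw [Fintype.card_subtype_compl]
  simp

lemma singleton_sum {n : ℕ} (i : Fin n) (E : Fin n → Fin n → ℤ) :
    ∑ σ : Equiv.Perm (Fin n), E i (σ i) = (Nat.factorial (n-1) : ℤ) * ∑ j, E i j := by
  classical
  have hs : ∀ b : Fin n, (Finset.univ.filter fun σ : Equiv.Perm (Fin n) => σ i = b).card
      = Nat.factorial (n - 1) := by
    intro b
    have h := fiber_card {i} (Equiv.swap i b)
    simp only [Finset.card_singleton] at h
    rw [← h]
    congr 1
    apply Finset.filter_congr
    intro σ _
    simp [Equiv.swap_apply_left]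
  rw [Finset.sum_comp (fun b => E i b) (fun σ : Equiv.Perm (Fin n) => σ i)]
  have himg : (Finset.univ : Finset (Equiv.Perm (Fin n))).image (fun σ => σ i) = Finset.univ := by
    apply Finset.eq_univ_of_forall
    intro b
    exact Finset.mem_image.mpr ⟨Equiv.swap i b, Finset.mem_univ _, Equiv.swap_apply_left i b⟩
  rw [himg, Finset.sum_congr rfl fun b _ => by rw [hs b], ← Finset.smul_sum, nsmul_eq_mul]

lemma dvd_sum_prod {n : ℕ} (S : Finset (Fin n)) (E : Fin n → Fin n → ℤ) :
    ((Nat.factorial (n - S.card)) : ℤ) ∣ ∑ σ : Equiv.Perm (Fin n), ∏ i ∈ S, E i (σ i) := by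
  classical
  set r : Equiv.Perm (Fin n) → (Fin n → Fin n) := fun σ i => if i ∈ S then σ i else i with hr
  have key : ∀ σ : Equiv.Perm (Fin n), ∏ i ∈ S, E i (σ i) = ∏ i ∈ S, E i (r σ i) :=
    fun σ => Finset.prod_congr rfl fun i hi => by simp [hr, hi]
  calc ((Nat.factorial (n - S.card)) : ℤ)
      ∣ ∑ b ∈ (Finset.univ : Finset (Equiv.Perm (Fin n))).image r,
          ((Finset.univ.filter fun σ => r σ = b).card) • ∏ i ∈ S, E i (b i) := by
        apply Finset.dvd_sum
        intro b hb
        obtain ⟨σ0, -, hσ0⟩ := Finset.mem_image.mp hb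
        have hcard : (Finset.univ.filter fun σ : Equiv.Perm (Fin n) => r σ = b).card
            = Nat.factorial (n - S.card) := by
          rw [← fiber_card S σ0]
          congr 1
          apply Finset.filter_congr
          intro σ _
          subst hσ0
          constructor
          · intro h i hi
            have := congrFun h i
            simpa [hr, hi] using this
          · intro h
            funext i
            by_cases hi : i ∈ S
            · simp [hr, hi, h i hi]
            · simp [hr, hi]
        rw [hcard, nsmul_eq_mul]
        exact Dvd.intro _ rfl
    _ = ∑ σ : Equiv.Perm (Fin n), ∏ i ∈ S, E i (σ i) := by
        rw [Finset.sum_congr rfl fun σ _ => key σ]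
        exact (Finset.sum_comp (fun b => ∏ i ∈ S, E i (b i)) r).symm

/-- If `n = 2^k` with `k ≥ 2` and `M` is an `n × n` `(±1)`-matrix with vanishing permanent,
then the number `μ(M)` of `-1` entries of `M` is even. -/
theorem mu_even_of_per_eq_zero {k n : ℕ} (hk : 2 ≤ k) (hn : n = 2 ^ k)
    (M : Matrix (Fin n) (Fin n) ℤ) (hM : ∀ i j, M i j = 1 ∨ M i j = -1)
    (hper : perm M = 0) :
    Even (mu M) := by
  classical
  have hkn : k < n := hn ▸ Nat.lt_two_pow_self (n := k)
  have hn4 : 4 ≤ n := by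
    rw [hn]
    calc 4 = 2 ^ 2 := by norm_num
    _ ≤ 2 ^ k := Nat.pow_le_pow_right (by norm_num) hk
  set E : Fin n → Fin n → ℤ := fun i j => if M i j = -1 then 1 else 0 with hE
  have hME : ∀ i j, M i j = (-2) * E i j + 1 := by
    intro i j
    rcases hM i j with h | h <;> simp [hE, h] <;> norm_num
  set c : Finset (Fin n) → ℤ :=
    fun S => (-2:ℤ)^S.card * ∑ σ : Equiv.Perm (Fin n), ∏ i ∈ S, E i (σ i) with hc
  -- decomposition
  have hdecomp : perm M = ∑ S ∈ Finset.univ.powerset, c S := by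
    unfold perm
    calc ∑ σ : Equiv.Perm (Fin n), ∏ i, M i (σ i)
        = ∑ σ : Equiv.Perm (Fin n), ∑ S ∈ Finset.univ.powerset,
            (-2:ℤ)^S.card * ∏ i ∈ S, E i (σ i) := by
          apply Finset.sum_congr rfl
          intro σ _
          calc ∏ i, M i (σ i) = ∏ i, ((-2) * E i (σ i) + 1) :=
                Finset.prod_congr rfl fun i _ => by rw [hME]
          _ = ∑ S ∈ Finset.univ.powerset,
                (∏ i ∈ S, (-2) * E i (σ i)) * ∏ i ∈ Finset.univ \ S, 1 :=
              Finset.prod_add _ _ _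
          _ = ∑ S ∈ Finset.univ.powerset, (-2:ℤ)^S.card * ∏ i ∈ S, E i (σ i) := by
              apply Finset.sum_congr rfl
              intro S _
              rw [Finset.prod_const_one, mul_one, Finset.prod_mul_distrib,
                Finset.prod_const]
      _ = ∑ S ∈ Finset.univ.powerset, c S := by
          rw [Finset.sum_comm]
          apply Finset.sum_congr rfl
          intro S _
          rw [← Finset.mul_sum]
  -- mu as a sum
  have hmu : ∑ i, ∑ j, E i j = (mu M : ℤ) := by
    unfold mu
    rw [← Finset.sum_boole, ← Finset.univ_product_univ, Finset.sum_product]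
  -- the singleton part
  have hfilter1 : Finset.univ.powerset.filter (fun S : Finset (Fin n) => S.card = 1)
      = Finset.univ.image (fun i : Fin n => ({i} : Finset (Fin n))) := by
    ext S
    simp [Finset.card_eq_one, eq_comm]
  have hsingle : ∑ S ∈ Finset.univ.powerset.filter (fun S => S.card = 1), c S
      = -2 * (Nat.factorial (n-1) : ℤ) * (mu M : ℤ) := by
    rw [hfilter1, Finset.sum_image (fun i _ j _ h => Finset.singleton_injective h)]
    have : ∀ i : Fin n, c {i} = -2 * ((Nat.factorial (n-1) : ℤ) * ∑ j, E i j) := by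
      intro i
      rw [hc]
      simp only [Finset.card_singleton, pow_one, Finset.prod_singleton]
      rw [singleton_sum]
    rw [Finset.sum_congr rfl fun i _ => this i]
    rw [← Finset.mul_sum, ← Finset.mul_sum, hmu]
    ring
  -- divisibility of the rest
  have hdvd : (2:ℤ)^(n-k+1) ∣ ∑ S ∈ Finset.univ.powerset.filter (fun S => ¬ S.card = 1), c S := by
    apply Finset.dvd_sum
    intro S hS
    have hS1 : ¬ S.card = 1 := (Finset.mem_filter.mp hS).2
    have hSn : S.card ≤ n := by
      have := Finset.card_le_univ S
      simpa using this
    -- key numeric fact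
    set j := S.card
    set m := n - j with hm
    have hjm : j + m = n := by omega
    have hs_le : (Nat.digits 2 m).sum ≤ k - 1 := by
      rcases Nat.eq_zero_or_pos j with hj0 | hjpos
      · have : m = n := by omega
        rw [this, hn, s2_pow]
        omega
      · have hj2 : 2 ≤ j := by omega
        have h1 : m < 2 ^ k := by omega
        have h2 : m ≠ 2 ^ k - 1 := by omega
        have := s2_lt_of_lt k m h1 h2
        omega
    have hsm : (Nat.digits 2 m).sum ≤ m := s2_le_self m
    have hval : 2 ^ (m - (Nat.digits 2 m).sum) ∣ Nat.factorial m := by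
      rw [← val_factorial]
      exact pow_padicValNat_dvd
    have hdvdnat : 2 ^ (n - k + 1) ∣ 2 ^ j * Nat.factorial m := by
      have h1 : 2 ^ (j + (m - (Nat.digits 2 m).sum)) ∣ 2 ^ j * Nat.factorial m := by
        rw [pow_add]
        exact mul_dvd_mul_left _ hval
      refine dvd_trans (pow_dvd_pow 2 ?_) h1
      omega
    have hdvdint : (2:ℤ) ^ (n - k + 1) ∣ (-2:ℤ) ^ j * (Nat.factorial m : ℤ) := by
      have h2 : (2:ℤ) ^ (n - k + 1) ∣ (2:ℤ) ^ j * (Nat.factorial m : ℤ) := by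
        exact_mod_cast hdvdnat
      rcases h2 with ⟨t, ht⟩
      refine ⟨(-1)^j * t, ?_⟩
      have hneg : (-2:ℤ)^j = (-1)^j * 2^j := by rw [← neg_one_mul, mul_pow]
      rw [hneg]
      calc (-1:ℤ)^j * 2^j * (Nat.factorial m : ℤ) = (-1)^j * (2^j * Nat.factorial m) := by ring
      _ = (-1)^j * (2 ^ (n-k+1) * t) := by rw [ht]
      _ = 2 ^ (n-k+1) * ((-1)^j * t) := by ring
    show (2:ℤ)^(n-k+1) ∣ (-2:ℤ)^(S.card) * ∑ σ : Equiv.Perm (Fin n), ∏ i ∈ S, E i (σ i)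
    obtain ⟨q, hq⟩ := dvd_sum_prod S E
    rw [hq]
    rcases hdvdint with ⟨t, ht⟩
    exact ⟨t * q, by rw [← mul_assoc, ht]; ring⟩
  -- combine
  have hsplit := Finset.sum_filter_add_sum_filter_not Finset.univ.powerset
    (fun S : Finset (Fin n) => S.card = 1) c
  have hB : (2:ℤ)^(n-k+1) ∣ 2 * (Nat.factorial (n-1) : ℤ) * (mu M : ℤ) := by
    have h0 : (0:ℤ) = -2 * (Nat.factorial (n-1) : ℤ) * (mu M : ℤ)
        + ∑ S ∈ Finset.univ.powerset.filter (fun S => ¬ S.card = 1), c S := by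
      rw [← hsingle, hsplit, ← hdecomp, hper]
    have : 2 * (Nat.factorial (n-1) : ℤ) * (mu M : ℤ)
        = ∑ S ∈ Finset.univ.powerset.filter (fun S => ¬ S.card = 1), c S := by linarith
    rw [this]; exact hdvd
  -- extract evenness
  set F := Nat.factorial (n - 1) with hF
  set v := F.factorization 2 with hv
  have hFpos : F ≠ 0 := Nat.factorial_ne_zero _
  have hn1 : n - 1 = 2 ^ k - 1 := by omega
  have hvval : v = n - 1 - k := by
    rw [hv, hF, Nat.factorization_def _ Nat.prime_two, val_factorial, hn1, s2_pow_sub_one]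
  set cF := F / 2 ^ v with hcF
  have hFsplit : F = 2 ^ v * cF := (Nat.ordProj_mul_ordCompl_eq_self F 2).symm
  have hodd : ¬ 2 ∣ cF := Nat.not_dvd_ordCompl Nat.prime_two hFpos
  have hBB : (2:ℤ)^(n-k) * ((cF:ℤ) * (mu M : ℤ)) = 2 * (F : ℤ) * (mu M : ℤ) := by
    have hFc : (F:ℤ) = 2 ^ v * (cF:ℤ) := by exact_mod_cast hFsplit
    rw [hFc, hvval]
    have hnk : n - k = (n - 1 - k) + 1 := by omega
    rw [hnk, pow_succ]
    ring
  have h2dvd : (2:ℤ) ∣ (cF:ℤ) * (mu M : ℤ) := by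
    rcases hB with ⟨t, ht⟩
    rw [← hBB] at ht
    have hpow : (2:ℤ)^(n-k+1) = 2^(n-k) * 2 := by rw [pow_succ]
    rw [hpow, mul_assoc] at ht
    have := mul_left_cancel₀ (pow_ne_zero (n-k) (two_ne_zero)) ht
    exact ⟨t, this⟩
  have h2nat : 2 ∣ cF * mu M := by exact_mod_cast h2dvd
  rcases (Nat.Prime.dvd_mul Nat.prime_two).mp h2nat with h | h
  · exact absurd h hodd
  · exact even_iff_two_dvd.mpr h
end
end

section
/- Let Σ_1 be the 4×5 matrix with rows (−1,+1,+1,−1,−1), (+1,−1,+1,+1,+1), (+1,+1,−1,+1,+1), (+1,+1,+1,+1,+1), and let Σ_2 be the 4×5 matrix with rows (−1,+1,+1,−1,+1), (+1,−1,+1,+1,−1), (+1,+1,−1,+1,+1), (+1,+1,+1,+1,+1). Then both Σ_1 and Σ_2 have rank 3 over ℚ; the polynomial ∏_{i=1}^{4} (Σ_1[i,1]α_1 + Σ_1[i,2]α_2 + ⋯ + Σ_1[i,5]α_5) belongs to the ideal of ℤ[α_1,…,α_5] generated by α_1², α_2², α_3², α_4², α_5², while the polynomial ∏_{i=1}^{4}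 (Σ_2[i,1]α_1 + ⋯ + Σ_2[i,5]α_5) does not belong to that ideal. -/
open scoped BigOperators
open MvPolynomial

def Mat1 : Matrix (Fin 4) (Fin 5) ℤ :=
  !![-1, 1, 1, -1, -1; 1, -1, 1, 1, 1; 1, 1, -1, 1, 1; 1, 1, 1, 1, 1]

def Mat2 : Matrix (Fin 4) (Fin 5) ℤ :=
  !![-1, 1, 1, -1, 1; 1, -1, 1, 1, -1; 1, 1, -1, 1, 1; 1, 1, 1, 1, 1]

set_option maxHeartbeats 2000000

private lemma rank_aux (A : Matrix (Fin 4) (Fin 5) ℤ)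
    (B : Matrix (Fin 4) (Fin 3) ℤ) (Cm : Matrix (Fin 3) (Fin 5) ℤ) (hBC : A = B * Cm)
    (F : Matrix (Fin 3) (Fin 4) ℤ) (G : Matrix (Fin 5) (Fin 3) ℤ)
    (hdet : ((F * A * G).map (Int.cast : ℤ → ℚ)).det ≠ 0) :
    (A.map (Int.cast : ℤ → ℚ)).rank = 3 := by
  have hmap : ∀ {m n p : ℕ} (M : Matrix (Fin m) (Fin n) ℤ) (N : Matrix (Fin n) (Fin p) ℤ),
      ((M * N).map (Int.cast : ℤ → ℚ)) = M.map (Int.cast : ℤ → ℚ) * N.map (Int.cast : ℤ → ℚ) :=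
    fun M N => Matrix.map_mul (f := Int.castRingHom ℚ)
  apply le_antisymm
  · calc (A.map (Int.cast : ℤ → ℚ)).rank
        = (B.map (Int.cast : ℤ → ℚ) * Cm.map (Int.cast : ℤ → ℚ)).rank := by rw [hBC, hmap]
      _ ≤ (Cm.map (Int.cast : ℤ → ℚ)).rank := Matrix.rank_mul_le_right _ _
      _ ≤ 3 := by simpa using (Cm.map (Int.cast : ℤ → ℚ)).rank_le_card_height
  · have hunit : IsUnit ((F * A * G).map (Int.cast : ℤ → ℚ)) := by
      rw [Matrix.isUnit_iff_isUnit_det]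
      exact isUnit_iff_ne_zero.mpr hdet
    calc (3 : ℕ) = ((F * A * G).map (Int.cast : ℤ → ℚ)).rank := by
          rw [Matrix.rank_of_isUnit _ hunit]; simp
      _ = (F.map (Int.cast : ℤ → ℚ) * (A.map (Int.cast : ℤ → ℚ) * G.map (Int.cast : ℤ → ℚ))).rank := by
          rw [hmap, hmap, Matrix.mul_assoc]
      _ ≤ (A.map (Int.cast : ℤ → ℚ) * G.map (Int.cast : ℤ → ℚ)).rank := Matrix.rank_mul_le_right _ _
      _ ≤ (A.map (Int.cast : ℤ → ℚ)).rank := Matrix.rank_mul_le_left _ _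

private lemma eight_not_mem : (C 8 * (X 0 * X 1 * X 3 * X 4) : MvPolynomial (Fin 5) ℤ) ∉
    Ideal.span (Set.range fun j : Fin 5 => (X j : MvPolynomial (Fin 5) ℤ) ^ 2) := by
  intro hmem
  rw [Ideal.span, Submodule.mem_span_range_iff_exists_fun] at hmem
  obtain ⟨c, hc⟩ := hmem
  set m : Fin 5 →₀ ℕ := Finsupp.single 0 1 + Finsupp.single 1 1 + Finsupp.single 3 1
    + Finsupp.single 4 1 with hm
  have h8 : (C 8 * (X 0 * X 1 * X 3 * X 4) : MvPolynomial (Fin 5) ℤ) = monomial m 8 := by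
    have hX : (X 0 * X 1 * X 3 * X 4 : MvPolynomial (Fin 5) ℤ) = monomial m 1 := by
      simp [hm, X, monomial_mul]
    rw [hX, C_mul_monomial]
    norm_num
  have := congrArg (coeff m) hc
  rw [h8, coeff_monomial, if_pos rfl] at this
  rw [Fin.sum_univ_five] at this
  simp only [smul_eq_mul, X_pow_eq_monomial, coeff_add, coeff_mul_monomial'] at this
  rw [if_neg, if_neg, if_neg, if_neg, if_neg] at this
  · norm_num at this
  all_goals
    simp [hm, Finsupp.single_le_iff, Finsupp.add_apply, Finsupp.single_apply]

/-- The two `4 × 5` sign matrices `Σ₁` and `Σ₂` both have rank `3` over `ℚ`; the polynomial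
`∏ᵢ (Σ₁[i,1]α₁ + ⋯ + Σ₁[i,5]α₅)` lies in the ideal `(α₁², …, α₅²)` of `ℤ[α₁,…,α₅]`, while
`∏ᵢ (Σ₂[i,1]α₁ + ⋯ + Σ₂[i,5]α₅)` does not. Hence the converse of the rank criterion fails. -/
theorem five_qubit_rank_three_examples :
    (Mat1.map (Int.cast : ℤ → ℚ)).rank = 3 ∧
    (Mat2.map (Int.cast : ℤ → ℚ)).rank = 3 ∧
    (∏ i : Fin 4, (∑ j : Fin 5, C (Mat1 i j) * X j) : MvPolynomial (Fin 5) ℤ)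
      ∈ Ideal.span (Set.range fun j : Fin 5 => (X j : MvPolynomial (Fin 5) ℤ) ^ 2) ∧
    (∏ i : Fin 4, (∑ j : Fin 5, C (Mat2 i j) * X j) : MvPolynomial (Fin 5) ℤ)
      ∉ Ideal.span (Set.range fun j : Fin 5 => (X j : MvPolynomial (Fin 5) ℤ) ^ 2) := by
  have esum : ∀ (A : Matrix (Fin 4) (Fin 5) ℤ) (i : Fin 4),
      (∑ j : Fin 5, C (A i j) * X j : MvPolynomial (Fin 5) ℤ) =
      C (A i 0) * X 0 + C (A i 1) * X 1 + C (A i 2) * X 2 + C (A i 3) * X 3 + C (A i 4) * X 4 := by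
    intro A i; rw [Fin.sum_univ_five]
  have hXsq : ∀ j : Fin 5, (X j : MvPolynomial (Fin 5) ℤ) ^ 2 ∈
      Ideal.span (Set.range fun j : Fin 5 => (X j : MvPolynomial (Fin 5) ℤ) ^ 2) :=
    fun j => Ideal.subset_span ⟨j, rfl⟩
  refine ⟨?_, ?_, ?_, ?_⟩
  · refine rank_aux Mat1 !![1,0,0; 0,1,0; 0,0,1; 1,1,1]
      !![-1, 1, 1, -1, -1; 1, -1, 1, 1, 1; 1, 1, -1, 1, 1] (by decide)
      !![1,0,0,0; 0,1,0,0; 0,0,1,0] !![1,0,0; 0,1,0; 0,0,1; 0,0,0; 0,0,0] ?_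
    have h : (!![1,0,0,0; 0,1,0,0; 0,0,1,0] : Matrix (Fin 3) (Fin 4) ℤ) * Mat1 * (!![1,0,0; 0,1,0; 0,0,1; 0,0,0; 0,0,0] : Matrix (Fin 5) (Fin 3) ℤ)
        = !![-1,1,1; 1,-1,1; 1,1,-1] := by decide
    rw [h]
    norm_num [Matrix.det_fin_three, Matrix.map_apply, Matrix.cons_val_zero, Matrix.cons_val_one,
      Matrix.head_cons, Matrix.vecHead, Matrix.vecTail, Matrix.cons_val_two, Matrix.tail_cons]
  · refine rank_aux Mat2 !![1,0,0; 0,1,0; 0,0,1; 1,1,1]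
      !![-1, 1, 1, -1, 1; 1, -1, 1, 1, -1; 1, 1, -1, 1, 1] (by decide)
      !![1,0,0,0; 0,1,0,0; 0,0,1,0] !![1,0,0; 0,1,0; 0,0,1; 0,0,0; 0,0,0] ?_
    have h : (!![1,0,0,0; 0,1,0,0; 0,0,1,0] : Matrix (Fin 3) (Fin 4) ℤ) * Mat2 * (!![1,0,0; 0,1,0; 0,0,1; 0,0,0; 0,0,0] : Matrix (Fin 5) (Fin 3) ℤ)
        = !![-1,1,1; 1,-1,1; 1,1,-1] := by decide
    rw [h]
    norm_num [Matrix.det_fin_three, Matrix.map_apply, Matrix.cons_val_zero, Matrix.cons_val_one,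
      Matrix.head_cons, Matrix.vecHead, Matrix.vecTail, Matrix.cons_val_two, Matrix.tail_cons]
  · have hd1 : (∏ i : Fin 4, (∑ j : Fin 5, C (Mat1 i j) * X j) : MvPolynomial (Fin 5) ℤ) =
        ((-1)*X 0*X 0 + (-4)*X 0*X 3 + (-4)*X 0*X 4 + 2*X 1*X 1 + 2*X 2*X 2 + (-6)*X 3*X 3 + (-12)*X 3*X 4 + (-6)*X 4*X 4) * X 0^2
        + (4*X 0*X 3 + 4*X 0*X 4 + (-1)*X 1*X 1 + 2*X 2*X 2 + 2*X 3*X 3 + 4*X 3*X 4 + 2*X 4*X 4) * X 1^2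
        + (4*X 0*X 3 + 4*X 0*X 4 + (-1)*X 2*X 2 + 2*X 3*X 3 + 4*X 3*X 4 + 2*X 4*X 4) * X 2^2
        + ((-4)*X 0*X 3 + (-12)*X 0*X 4 + (-1)*X 3*X 3 + (-4)*X 3*X 4 + (-6)*X 4*X 4) * X 3^2
        + ((-12)*X 0*X 3 + (-4)*X 0*X 4 + (-4)*X 3*X 4 + (-1)*X 4*X 4) * X 4^2 := by
      rw [Fin.prod_univ_four, esum, esum, esum, esum]
      norm_num [Mat1, Matrix.cons_val_zero, Matrix.cons_val_one, Matrix.head_cons,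
        Matrix.vecHead, Matrix.vecTail, Matrix.cons_val_two, Matrix.cons_val_three, Matrix.cons_val_four,
        Matrix.tail_cons]
      ring
    rw [hd1]
    exact Ideal.add_mem _ (Ideal.add_mem _ (Ideal.add_mem _ (Ideal.add_mem _
      (Ideal.mul_mem_left _ _ (hXsq 0)) (Ideal.mul_mem_left _ _ (hXsq 1)))
      (Ideal.mul_mem_left _ _ (hXsq 2))) (Ideal.mul_mem_left _ _ (hXsq 3)))
      (Ideal.mul_mem_left _ _ (hXsq 4))
  · have hd2 : (∏ i : Fin 4, (∑ j : Fin 5, C (Mat2 i j) * X j) : MvPolynomial (Fin 5) ℤ) =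
        C 8 * (X 0 * X 1 * X 3 * X 4)
        + (((-1)*X 0*X 0 + (-4)*X 0*X 3 + 2*X 1*X 1 + 4*X 1*X 4 + 2*X 2*X 2 + (-6)*X 3*X 3 + 2*X 4*X 4) * X 0^2
        + (4*X 0*X 3 + (-1)*X 1*X 1 + (-4)*X 1*X 4 + 2*X 2*X 2 + 2*X 3*X 3 + (-6)*X 4*X 4) * X 1^2
        + (4*X 0*X 3 + 4*X 1*X 4 + (-1)*X 2*X 2 + 2*X 3*X 3 + 2*X 4*X 4) * X 2^2
        + ((-4)*X 0*X 3 + 4*X 1*X 4 + (-1)*X 3*X 3 + 2*X 4*X 4) * X 3^2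
        + (4*X 0*X 3 + (-4)*X 1*X 4 + (-1)*X 4*X 4) * X 4^2) := by
      rw [Fin.prod_univ_four, esum, esum, esum, esum]
      norm_num [Mat2, Matrix.cons_val_zero, Matrix.cons_val_one, Matrix.head_cons,
        Matrix.vecHead, Matrix.vecTail, Matrix.cons_val_two, Matrix.cons_val_three, Matrix.cons_val_four,
        Matrix.tail_cons]
      ring
    intro hmem
    rw [hd2] at hmem
    have hS : (((-1)*X 0*X 0 + (-4)*X 0*X 3 + 2*X 1*X 1 + 4*X 1*X 4 + 2*X 2*X 2 + (-6)*X 3*X 3 + 2*X 4*X 4) * X 0^2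
        + (4*X 0*X 3 + (-1)*X 1*X 1 + (-4)*X 1*X 4 + 2*X 2*X 2 + 2*X 3*X 3 + (-6)*X 4*X 4) * X 1^2
        + (4*X 0*X 3 + 4*X 1*X 4 + (-1)*X 2*X 2 + 2*X 3*X 3 + 2*X 4*X 4) * X 2^2
        + ((-4)*X 0*X 3 + 4*X 1*X 4 + (-1)*X 3*X 3 + 2*X 4*X 4) * X 3^2
        + (4*X 0*X 3 + (-4)*X 1*X 4 + (-1)*X 4*X 4) * X 4^2 : MvPolynomial (Fin 5) ℤ) ∈
        Ideal.span (Set.range fun j : Fin 5 => (X j : MvPolynomial (Fin 5) ℤ) ^ 2) :=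
      Ideal.add_mem _ (Ideal.add_mem _ (Ideal.add_mem _ (Ideal.add_mem _
        (Ideal.mul_mem_left _ _ (hXsq 0)) (Ideal.mul_mem_left _ _ (hXsq 1)))
        (Ideal.mul_mem_left _ _ (hXsq 2))) (Ideal.mul_mem_left _ _ (hXsq 3)))
        (Ideal.mul_mem_left _ _ (hXsq 4))
    have h8 := Ideal.sub_mem _ hmem hS
    rw [add_sub_cancel_right] at h8
    exact eight_not_mem h8
end
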